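/- If (X,Y) is a minimally-sided homogeneous cut of a trigraph T, then the block of decomposition T_X has no homogeneous cut. -/

import Mathlib

structure Trigraph (V : Type*) where
  θ : V → V → ℤ
  symm : ∀ u v, θ u v = θ v u
  range : ∀ u v, u ≠ v → θ u v = -1 ∨ θ u v = 0 ∨ θ u v = 1

namespace Trigraph

variable {V : Type*}

/-- `u` and `v` form a strong edge. -/
def SEdge (T : Trigraph V) (u v : V) : Prop := u ≠ v ∧ T.θ u v = 1

/-- `u` and `v` form a strong antiedge. -/
def SAnti (T : Trigraph V) (u v : V) : Prop := u ≠ v ∧ T.θ u v = -1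

/-- `u` and `v` form a switchable pair. -/
def Switch (T : Trigraph V) (u v : V) : Prop := u ≠ v ∧ T.θ u v = 0

/-- `u` and `v` are adjacent. -/
def Adj (T : Trigraph V) (u v : V) : Prop := u ≠ v ∧ (T.θ u v = 0 ∨ T.θ u v = 1)

/-- `u` and `v` are antiadjacent. -/
def Anti (T : Trigraph V) (u v : V) : Prop := u ≠ v ∧ (T.θ u v = -1 ∨ T.θ u v = 0)

instance [DecidableEq V] (T : Trigraph V) (u v : V) : Decidable (T.Adj u v) :=
  inferInstanceAs (Decidable (u ≠ v ∧ (T.θ u v = 0 ∨ T.θ u v = 1)))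

instance [DecidableEq V] (T : Trigraph V) (u v : V) : Decidable (T.Anti u v) :=
  inferInstanceAs (Decidable (u ≠ v ∧ (T.θ u v = -1 ∨ T.θ u v = 0)))

instance [DecidableEq V] (T : Trigraph V) (u v : V) : Decidable (T.Switch u v) :=
  inferInstanceAs (Decidable (u ≠ v ∧ T.θ u v = 0))

instance [DecidableEq V] (T : Trigraph V) (u v : V) : Decidable (T.SAnti u v) :=
  inferInstanceAs (Decidable (u ≠ v ∧ T.θ u v = -1))

/-- A trigraph is monogamous if every vertex is in at most one switchable pair. -/
def Monogamous (T : Trigraph V) : Prop :=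
  ∀ v u w : V, T.Switch v u → T.Switch v w → u = w

/-- The complement trigraph. -/
def compl (T : Trigraph V) : Trigraph V where
  θ := fun u v => -(T.θ u v)
  symm := fun u v => congrArg Neg.neg (T.symm u v)
  range := fun u v h => by
    have := T.range u v h
    try dsimp only
    omega

def IsBull (T : Trigraph V) (x1 x2 x3 y z : V) : Prop :=
  T.Adj x1 x2 ∧ T.Adj x1 x3 ∧ T.Adj x2 x3 ∧
  T.Adj y x1 ∧ T.Anti y x2 ∧ T.Anti y x3 ∧ T.Anti y z ∧
  T.Adj z x2 ∧ T.Anti z x1 ∧ T.Anti z x3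

def BullFree (T : Trigraph V) : Prop := ∀ x1 x2 x3 y z : V, ¬ T.IsBull x1 x2 x3 y z

/-- `S` is strongly complete to `A`. -/
def SComplete (T : Trigraph V) (S A : Set V) : Prop := ∀ s ∈ S, ∀ a ∈ A, T.SEdge s a

/-- `S` is strongly anticomplete to `A`. -/
def SAnticomplete (T : Trigraph V) (S A : Set V) : Prop := ∀ s ∈ S, ∀ a ∈ A, T.SAnti s a

/-- A homogeneous set. -/
def HomSet (T : Trigraph V) (X : Set V) : Prop :=
  1 < X.ncard ∧ X.ncard < Nat.card V ∧
  ∀ v ∉ X, (∀ a ∈ X, T.SEdge v a) ∨ (∀ a ∈ X, T.SAnti v a)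

/-- `(A,B,C,D,E,F)` is a split of the homogeneous pair `(A,B)`. -/
def IsSplit (T : Trigraph V) (A B C D E F : Set V) : Prop :=
  A.Nonempty ∧ B.Nonempty ∧ Disjoint A B ∧
  Disjoint C D ∧ Disjoint C E ∧ Disjoint C F ∧
  Disjoint D E ∧ Disjoint D F ∧ Disjoint E F ∧
  C ∪ D ∪ E ∪ F = (A ∪ B)ᶜ ∧
  T.SComplete A (C ∪ E) ∧ T.SAnticomplete A (D ∪ F) ∧
  T.SComplete B (D ∪ E) ∧ T.SAnticomplete B (C ∪ F) ∧
  ¬ T.SComplete A B ∧ ¬ T.SAnticomplete A B ∧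
  3 ≤ (A ∪ B).ncard ∧ 3 ≤ (C ∪ D ∪ E ∪ F).ncard

/-- `(A,B)` is a homogeneous pair. -/
def HomPair (T : Trigraph V) (A B : Set V) : Prop := ∃ C D E F, T.IsSplit A B C D E F

/-- A small homogeneous pair. -/
def SmallHomPair (T : Trigraph V) (A B : Set V) : Prop :=
  T.HomPair A B ∧ (A ∪ B).ncard ≤ 6

/-- A proper homogeneous pair. -/
def ProperHomPair (T : Trigraph V) (A B : Set V) : Prop :=
  ∃ C D E F, T.IsSplit A B C D E F ∧ C.Nonempty ∧ D.Nonempty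

/-- `(X, Xᶜ)` is a decomposition of `T`. -/
def Decomp (T : Trigraph V) (X : Set V) : Prop :=
  T.HomSet X ∨ ∃ A B, X = A ∪ B ∧ (T.SmallHomPair A B ∨ T.ProperHomPair A B)

/-- `(X, Xᶜ)` is a homogeneous cut of `T`. -/
def HomCut (T : Trigraph V) (X : Set V) : Prop :=
  T.HomSet X ∨ ∃ A B, X = A ∪ B ∧ T.ProperHomPair A B

/-- A minimally-sided homogeneous cut. -/
def MinSidedHomCut (T : Trigraph V) (X : Set V) : Prop :=
  T.HomCut X ∧ ∀ X' : Set V, T.HomCut X' → ¬ X' ⊂ X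

/-- The induced subtrigraph on `X`. -/
def induce (T : Trigraph V) (X : Set V) : Trigraph X where
  θ := fun u v => T.θ u v
  symm := fun u v => T.symm u v
  range := fun u v h => T.range u v (fun hh => h (Subtype.ext hh))

open Classical in
/-- The trigraph obtained from `T[X]` by adding two marker vertices joined by a switchable
pair, the first strongly complete to (the trace in `X` of) `P` and strongly anticomplete to
the rest of `X`, the second strongly complete to `Q` and strongly anticomplete to the rest. -/
noncomputable def augment2 (T : Trigraph V) (X P Q : Set V) : Trigraph (↥X ⊕ Fin 2) where
  θ := fun u v =>
    match u, v with
    | Sum.inl u, Sum.inl v => T.θ u v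
    | Sum.inl u, Sum.inr i => if (i = 0 ∧ (u : V) ∈ P) ∨ (i = 1 ∧ (u : V) ∈ Q) then 1 else -1
    | Sum.inr i, Sum.inl u => if (i = 0 ∧ (u : V) ∈ P) ∨ (i = 1 ∧ (u : V) ∈ Q) then 1 else -1
    | Sum.inr _, Sum.inr _ => 0
  symm := by
    rintro (u | i) (v | j)
    · exact T.symm u v
    · rfl
    · rfl
    · rfl
  range := by
    rintro (u | i) (v | j) h
    · exact T.range u v fun hh => h (by rw [Subtype.ext hh])
    · dsimp only; split <;> simp
    · dsimp only; split <;> simp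
    · simp

/-- The block of decomposition `T_X` for a proper homogeneous pair `(A,B)`:
`T[A ∪ B]` together with marker vertices `c` (strongly complete to `A`) and `d`
(strongly complete to `B`), with `cd` a switchable pair. -/
noncomputable def blockXPair (T : Trigraph V) (A B : Set V) : Trigraph (↥(A ∪ B) ⊕ Fin 2) :=
  T.augment2 (A ∪ B) A B

/-- The block of decomposition `T_Y` for a homogeneous pair `(A,B)` with split
`(A,B,C,D,E,F)` : `T[Y]` (where `Y = (A ∪ B)ᶜ`) together with marker vertices `a`
(strongly complete to `C ∪ E`) and `b` (strongly complete to `D ∪ E`), with `ab` a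
switchable pair. -/
noncomputable def blockYPair (T : Trigraph V) (A B C D E : Set V) : Trigraph (↥(A ∪ B)ᶜ ⊕ Fin 2) :=
  T.augment2 (A ∪ B)ᶜ (C ∪ E) (D ∪ E)


/-- A strong clique: vertices pairwise strongly adjacent. -/
def StrongClique (T : Trigraph V) (K : Set V) : Prop := K.Pairwise T.SEdge

/-- A strong stable set: vertices pairwise strongly antiadjacent. -/
def StrongStable (T : Trigraph V) (K : Set V) : Prop := K.Pairwise T.SAnti

/-- `T[X]` is triangle-free. -/
def TriangleFreeOn (T : Trigraph V) (X : Set V) : Prop :=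
  ∀ x ∈ X, ∀ y ∈ X, ∀ z ∈ X, ¬ (T.Adj x y ∧ T.Adj x z ∧ T.Adj y z)

/-- Membership in the basic class `𝒯₁`. -/
def InT1 (T : Trigraph V) : Prop :=
  T.Monogamous ∧ ∃ (X : Set V) (t : ℕ) (K : Fin t → Set V),
    (X ∪ ⋃ i, K i) = Set.univ ∧
    (∀ i, Disjoint X (K i)) ∧ (∀ i j, i ≠ j → Disjoint (K i) (K j)) ∧
    T.TriangleFreeOn X ∧ (∀ i, T.StrongClique (K i)) ∧
    (∀ i j, i ≠ j → T.SAnticomplete (K i) (K j)) ∧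
    (∀ i, ∀ v ∈ K i, ∃ A B : Set V,
      A ∪ B = {x ∈ X | T.Adj v x} ∧ Disjoint A B ∧
      T.StrongStable A ∧ T.StrongStable B ∧ T.SComplete A B)

/-- Membership in the basic class `𝒯₀`: monogamous trigraphs on at most 8 vertices. -/
def InT0 (T : Trigraph V) : Prop := T.Monogamous ∧ Nat.card V ≤ 8

/-- A basic trigraph: a member of `𝒯₀ ∪ 𝒯₁ ∪ 𝒯₁bar`. -/
def Basic (T : Trigraph V) : Prop := T.InT0 ∨ T.InT1 ∨ T.compl.InT1

/-- `h` lists the vertices of a hole of length `k` in `T`. -/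
def IsHole (T : Trigraph V) (k : ℕ) (h : Fin k → V) : Prop :=
  4 ≤ k ∧ Function.Injective h ∧ ∀ i j : Fin k,
    (((i.val + 1) % k = j.val ∨ (j.val + 1) % k = i.val) → T.Adj (h i) (h j)) ∧
    (i ≠ j → ¬ ((i.val + 1) % k = j.val ∨ (j.val + 1) % k = i.val) → T.Anti (h i) (h j))

def HasOddHole (T : Trigraph V) : Prop := ∃ k, Odd k ∧ ∃ h : Fin k → V, T.IsHole k h

/-- A Berge trigraph: no odd hole and no odd antihole. -/
def Berge (T : Trigraph V) : Prop := ¬ T.HasOddHole ∧ ¬ T.compl.HasOddHole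

/-- `(wv, we)` are legitimate weights for the trigraph `T`: `we` is symmetric and for every
switchable pair `uv` we have `max (wv u) (wv v) ≤ we u v ≤ wv u + wv v`. -/
def GoodWeights (T : Trigraph V) (wv : V → ℕ) (we : V → V → ℕ) : Prop :=
  (∀ u v, we u v = we v u) ∧
  ∀ u v, T.Switch u v → max (wv u) (wv v) ≤ we u v ∧ we u v ≤ wv u + wv v

/-- `S` is a stable set of `T`. -/
def StableF (T : Trigraph V) (S : Finset V) : Prop :=
  ∀ u ∈ S, ∀ v ∈ S, u ≠ v → T.Anti u v

open Classical in
/-- The weight of a stable set `S`: the sum of the weights of the vertices of `S` that are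
strongly antiadjacent to every other vertex of `S`, plus the sum of the weights of the
switchable pairs with both ends in `S`. -/
noncomputable def weightF (T : Trigraph V) (wv : V → ℕ) (we : V → V → ℕ) (S : Finset V) : ℕ :=
  (∑ v ∈ S.filter (fun v => ∀ u ∈ S, u ≠ v → T.SAnti u v), wv v)
    + (∑ u ∈ S, ∑ v ∈ S, if T.Switch u v then we u v else 0) / 2

open Classical in
/-- The maximum weight of a stable set of `T` contained in `X`. -/
noncomputable def alphaOn [Fintype V] (T : Trigraph V) (wv : V → ℕ) (we : V → V → ℕ)
    (X : Set V) : ℕ :=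
  (Finset.univ.powerset.filter fun S : Finset V => ↑S ⊆ X ∧ T.StableF S).sup (T.weightF wv we)

/-- The maximum weight of a stable set of `T`. -/
noncomputable def alphaW [Fintype V] (T : Trigraph V) (wv : V → ℕ) (we : V → V → ℕ) : ℕ :=
  T.alphaOn wv we Set.univ

open Classical in
/-- The trigraph `T_{a → S}` obtained from `T` by turning the switchable pair `ab` into a
strong edge and adding a new vertex `a' = none` strongly complete to `N(a) ∖ {b}` and
strongly anticomplete to everything else (including `a`). -/
noncomputable def expandS (T : Trigraph V) (a b : V) : Trigraph (Option V) where
  θ := fun u v =>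
    match u, v with
    | some u, some v => if (u = a ∧ v = b) ∨ (u = b ∧ v = a) then 1 else T.θ u v
    | some u, none => if T.Adj a u ∧ u ≠ b then 1 else -1
    | none, some v => if T.Adj a v ∧ v ≠ b then 1 else -1
    | none, none => -1
  symm := by
    rintro (_ | u) (_ | v)
    · rfl
    · rfl
    · rfl
    · dsimp only
      have hiff : ((u = a ∧ v = b) ∨ (u = b ∧ v = a)) ↔ ((v = a ∧ u = b) ∨ (v = b ∧ u = a)) := by
        tauto
      rw [if_congr hiff rfl (T.symm u v)]
  range := by
    rintro (_ | u) (_ | v) h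
    · exact absurd rfl h
    · dsimp only; split <;> simp
    · dsimp only; split <;> simp
    · dsimp only
      split
      · simp
      · exact T.range u v fun hh => h (by rw [hh])

open Classical in
/-- The trigraph `T_{a → K}`, defined like `T_{a → S}` except that the new vertex `a'` is in
addition strongly adjacent to `a`. -/
noncomputable def expandK (T : Trigraph V) (a b : V) : Trigraph (Option V) where
  θ := fun u v =>
    match u, v with
    | some u, some v => if (u = a ∧ v = b) ∨ (u = b ∧ v = a) then 1 else T.θ u v
    | some u, none => if (T.Adj a u ∧ u ≠ b) ∨ u = a then 1 else -1
    | none, some v => if (T.Adj a v ∧ v ≠ b) ∨ v = a then 1 else -1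
    | none, none => -1
  symm := by
    rintro (_ | u) (_ | v)
    · rfl
    · rfl
    · rfl
    · dsimp only
      have hiff : ((u = a ∧ v = b) ∨ (u = b ∧ v = a)) ↔ ((v = a ∧ u = b) ∨ (v = b ∧ u = a)) := by
        tauto
      rw [if_congr hiff rfl (T.symm u v)]
  range := by
    rintro (_ | u) (_ | v) h
    · exact absurd rfl h
    · dsimp only; split <;> simp
    · dsimp only; split <;> simp
    · dsimp only
      split
      · simp
      · exact T.range u v fun hh => h (by rw [hh])

/-- Vertex weights for `T_{a → S}`. -/
def wvS (wv : V → ℕ) (we : V → V → ℕ) (a b : V) [DecidableEq V] : Option V → ℕ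
  | some v => if v = a then wv a + wv b - we a b else wv v
  | none => we a b - wv b

/-- Vertex weights for `T_{a → K}`. -/
def wvK (wv : V → ℕ) (we : V → V → ℕ) (a b : V) : Option V → ℕ
  | some v => wv v
  | none => we a b - wv b

/-- Switchable-pair weights for `T_{a → S}` and `T_{a → K}`. -/
def weO (we : V → V → ℕ) : Option V → Option V → ℕ
  | some u, some v => we u v
  | _, _ => 0

end Trigraph
namespace Trigraph

variable {V : Type}

lemma sedge_symm (T : Trigraph V) {u v : V} (h : T.SEdge u v) : T.SEdge v u :=
  ⟨h.1.symm, (T.symm v u).trans h.2⟩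

lemma santi_symm (T : Trigraph V) {u v : V} (h : T.SAnti u v) : T.SAnti v u :=
  ⟨h.1.symm, (T.symm v u).trans h.2⟩

lemma nonempty_of_not_scomplete {T : Trigraph V} {A B : Set V} (h : ¬ T.SComplete A B) :
    A.Nonempty ∧ B.Nonempty := by
  by_contra hc
  rw [not_and_or, Set.not_nonempty_iff_eq_empty, Set.not_nonempty_iff_eq_empty] at hc
  rcases hc with rfl | rfl
  · exact h fun s hs => (Set.notMem_empty s hs).elim
  · exact h fun s hs a ha => (Set.notMem_empty a ha).elim

lemma fin2cases : ∀ i : Fin 2, i = 0 ∨ i = 1 := by decide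

/-- Trace in `V` of a set of block vertices. -/
def pimg {X : Set V} (S : Set (↥X ⊕ Fin 2)) : Set V := Subtype.val '' (Sum.inl ⁻¹' S)

lemma mem_pimg {X : Set V} {S : Set (↥X ⊕ Fin 2)} {v : V} :
    v ∈ pimg S ↔ ∃ h : v ∈ X, Sum.inl (⟨v, h⟩ : ↥X) ∈ S := by
  constructor
  · rintro ⟨u, hu, rfl⟩; exact ⟨u.2, hu⟩
  · rintro ⟨h, hS⟩; exact ⟨⟨v, h⟩, hS, rfl⟩

lemma pimg_subset {X : Set V} (S : Set (↥X ⊕ Fin 2)) : pimg S ⊆ X := by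
  rintro v ⟨u, _, rfl⟩; exact u.2

lemma mem_pimg_of {X : Set V} {S : Set (↥X ⊕ Fin 2)} {u : ↥X} (h : Sum.inl u ∈ S) :
    (u : V) ∈ pimg S := ⟨u, h, rfl⟩

lemma pimg_union {X : Set V} (S S' : Set (↥X ⊕ Fin 2)) :
    pimg (S ∪ S') = pimg S ∪ pimg S' := by
  simp [pimg, Set.preimage_union, Set.image_union]

lemma pimg_disjoint {X : Set V} {S S' : Set (↥X ⊕ Fin 2)} (h : Disjoint S S') :
    Disjoint (pimg S) (pimg S') := by
  rw [Set.disjoint_left] at h ⊢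
  intro v hv hv'
  rw [mem_pimg] at hv hv'
  obtain ⟨hx, hS⟩ := hv
  obtain ⟨hx', hS'⟩ := hv'
  exact h hS hS'

lemma pimg_ncard {X : Set V} {S : Set (↥X ⊕ Fin 2)} (h : S ⊆ Set.range Sum.inl) :
    (pimg S).ncard = S.ncard := by
  have h1 : (Sum.inl '' (Sum.inl ⁻¹' S) : Set (↥X ⊕ Fin 2)) = S :=
    Set.image_preimage_eq_of_subset h
  calc (pimg S).ncard = (Sum.inl ⁻¹' S).ncard :=
        Set.ncard_image_of_injective _ Subtype.val_injective
    _ = (Sum.inl '' (Sum.inl ⁻¹' S)).ncard :=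
        (Set.ncard_image_of_injective _ Sum.inl_injective).symm
    _ = S.ncard := by rw [h1]

lemma range_inl_of_not_mem {X : Set V} {S : Set (↥X ⊕ Fin 2)}
    (h0 : Sum.inr 0 ∉ S) (h1 : Sum.inr 1 ∉ S) : S ⊆ Set.range Sum.inl := by
  rintro (u | i) hw
  · exact ⟨u, rfl⟩
  · rcases fin2cases i with rfl | rfl
    · exact absurd hw h0
    · exact absurd hw h1

lemma pimg_nonempty {X : Set V} {S : Set (↥X ⊕ Fin 2)} (h : S ⊆ Set.range Sum.inl)
    (hne : S.Nonempty) : (pimg S).Nonempty := by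
  obtain ⟨w, hw⟩ := hne
  obtain ⟨u, rfl⟩ := h hw
  exact ⟨u, u, hw, rfl⟩

lemma pimg_nonempty_of_ncard {X : Set V} {S : Set (↥X ⊕ Fin 2)} (h3 : 3 ≤ S.ncard) :
    (pimg S).Nonempty := by
  rw [Set.nonempty_iff_ne_empty]
  intro he
  have hsub : S ⊆ {Sum.inr 0, Sum.inr 1} := by
    rintro (u | i) hw
    · exact absurd (mem_pimg_of hw) (by rw [he]; exact Set.notMem_empty _)
    · rcases fin2cases i with rfl | rfl
      · exact Set.mem_insert _ _
      · exact Set.mem_insert_of_mem _ rfl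
  have h1 := Set.ncard_le_ncard hsub ((Set.finite_singleton _).insert _)
  rw [Set.ncard_pair (Sum.inr_injective.ne (by decide : (0 : Fin 2) ≠ 1))] at h1
  omega

lemma induce_sedge_iff (T : Trigraph V) {X : Set V} (u v : ↥X) :
    (T.induce X).SEdge u v ↔ T.SEdge (u : V) (v : V) :=
  ⟨fun h => ⟨fun he => h.1 (Subtype.ext he), h.2⟩,
   fun h => ⟨fun he => h.1 (congrArg Subtype.val he), h.2⟩⟩

lemma induce_santi_iff (T : Trigraph V) {X : Set V} (u v : ↥X) :
    (T.induce X).SAnti u v ↔ T.SAnti (u : V) (v : V) :=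
  ⟨fun h => ⟨fun he => h.1 (Subtype.ext he), h.2⟩,
   fun h => ⟨fun he => h.1 (congrArg Subtype.val he), h.2⟩⟩

lemma block_sedge_ll_iff (T : Trigraph V) (A B : Set V) (u v : ↥(A ∪ B)) :
    (T.blockXPair A B).SEdge (Sum.inl u) (Sum.inl v) ↔ T.SEdge (u : V) (v : V) :=
  ⟨fun h => ⟨fun he => h.1 (congrArg Sum.inl (Subtype.ext he)), h.2⟩,
   fun h => ⟨fun he => h.1 (congrArg Subtype.val (Sum.inl.inj he)), h.2⟩⟩

lemma block_santi_ll_iff (T : Trigraph V) (A B : Set V) (u v : ↥(A ∪ B)) :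
    (T.blockXPair A B).SAnti (Sum.inl u) (Sum.inl v) ↔ T.SAnti (u : V) (v : V) :=
  ⟨fun h => ⟨fun he => h.1 (congrArg Sum.inl (Subtype.ext he)), h.2⟩,
   fun h => ⟨fun he => h.1 (congrArg Subtype.val (Sum.inl.inj he)), h.2⟩⟩

lemma block_θ_rr (T : Trigraph V) (A B : Set V) (i j : Fin 2) :
    (T.blockXPair A B).θ (Sum.inr i) (Sum.inr j) = 0 := rfl

open Classical in
lemma block_θ_c (T : Trigraph V) (A B : Set V) (u : ↥(A ∪ B)) :
    (T.blockXPair A B).θ (Sum.inr 0) (Sum.inl u)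
      = if (u : V) ∈ A then 1 else -1 := by
  show (if ((0 : Fin 2) = 0 ∧ (u : V) ∈ A) ∨ ((0 : Fin 2) = 1 ∧ (u : V) ∈ B)
      then (1 : ℤ) else -1) = _
  by_cases h : (u : V) ∈ A
  · rw [if_pos (Or.inl ⟨rfl, h⟩), if_pos h]
  · rw [if_neg, if_neg h]
    rintro (⟨-, hA⟩ | ⟨h01, -⟩)
    · exact h hA
    · exact absurd h01 (by decide)

open Classical in
lemma block_θ_d (T : Trigraph V) (A B : Set V) (u : ↥(A ∪ B)) :
    (T.blockXPair A B).θ (Sum.inr 1) (Sum.inl u)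
      = if (u : V) ∈ B then 1 else -1 := by
  show (if ((1 : Fin 2) = 0 ∧ (u : V) ∈ A) ∨ ((1 : Fin 2) = 1 ∧ (u : V) ∈ B)
      then (1 : ℤ) else -1) = _
  by_cases h : (u : V) ∈ B
  · rw [if_pos (Or.inr ⟨rfl, h⟩), if_pos h]
  · rw [if_neg, if_neg h]
    rintro (⟨h01, -⟩ | ⟨-, hB⟩)
    · exact absurd h01 (by decide)
    · exact h hB

lemma block_sedge_c_iff (T : Trigraph V) (A B : Set V) (u : ↥(A ∪ B)) :
    (T.blockXPair A B).SEdge (Sum.inr 0) (Sum.inl u) ↔ (u : V) ∈ A := by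
  constructor
  · rintro ⟨-, h2⟩
    rw [block_θ_c] at h2
    by_contra hn
    rw [if_neg hn] at h2
    omega
  · intro h
    refine ⟨by simp, ?_⟩
    rw [block_θ_c, if_pos h]

lemma block_santi_c_iff (T : Trigraph V) (A B : Set V) (u : ↥(A ∪ B)) :
    (T.blockXPair A B).SAnti (Sum.inr 0) (Sum.inl u) ↔ (u : V) ∉ A := by
  constructor
  · rintro ⟨-, h2⟩ hn
    rw [block_θ_c, if_pos hn] at h2
    omega
  · intro h
    refine ⟨by simp, ?_⟩
    rw [block_θ_c, if_neg h]

lemma block_sedge_d_iff (T : Trigraph V) (A B : Set V) (u : ↥(A ∪ B)) :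
    (T.blockXPair A B).SEdge (Sum.inr 1) (Sum.inl u) ↔ (u : V) ∈ B := by
  constructor
  · rintro ⟨-, h2⟩
    rw [block_θ_d] at h2
    by_contra hn
    rw [if_neg hn] at h2
    omega
  · intro h
    refine ⟨by simp, ?_⟩
    rw [block_θ_d, if_pos h]

lemma block_santi_d_iff (T : Trigraph V) (A B : Set V) (u : ↥(A ∪ B)) :
    (T.blockXPair A B).SAnti (Sum.inr 1) (Sum.inl u) ↔ (u : V) ∉ B := by
  constructor
  · rintro ⟨-, h2⟩ hn
    rw [block_θ_d, if_pos hn] at h2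
    omega
  · intro h
    refine ⟨by simp, ?_⟩
    rw [block_θ_d, if_neg h]

end Trigraph
namespace Trigraph

lemma lemM {V : Type} [Fintype V] (T : Trigraph V)
    {A B C D E F P Q R S : Set V}
    (hCD : Disjoint C D) (hCE : Disjoint C E) (hCF : Disjoint C F)
    (hDE : Disjoint D E) (hDF : Disjoint D F) (hEF : Disjoint E F)
    (hunion : C ∪ D ∪ E ∪ F = (A ∪ B)ᶜ)
    (hAc : T.SComplete A (C ∪ E)) (hAa : T.SAnticomplete A (D ∪ F))
    (hBc : T.SComplete B (D ∪ E)) (hBa : T.SAnticomplete B (C ∪ F))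
    (hCne : C.Nonempty) (hDne : D.Nonempty)
    (hK3 : 3 ≤ (C ∪ D ∪ E ∪ F).ncard)
    (hpart : P ∪ Q ∪ R ∪ S = A ∪ B)
    (hPQ : Disjoint P Q) (hPR : Disjoint P R) (hPS : Disjoint P S)
    (hQR : Disjoint Q R) (hQS : Disjoint Q S) (hRS : Disjoint R S)
    (hPcR : T.SComplete P R) (hPaS : T.SAnticomplete P S)
    (hQcS : T.SComplete Q S) (hQaR : T.SAnticomplete Q R)
    (hRA : R ⊆ A) (hSB : S ⊆ B)
    (hPQne : (P ∪ Q).Nonempty) (hRS3 : 3 ≤ (R ∪ S).ncard) :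
    ∃ X'', T.HomCut X'' ∧ X'' ⊂ A ∪ B := by
  have hKX : ∀ v ∈ C ∪ D ∪ E ∪ F, v ∉ A ∪ B := by
    intro v hv
    rw [hunion] at hv
    exact hv
  have hXK : ∀ v, v ∉ A ∪ B → v ∈ C ∪ D ∪ E ∪ F := by
    intro v hv
    rw [hunion]
    exact hv
  have hcover : ∀ v ∈ A ∪ B, v ∈ P ∪ Q ∪ R ∪ S := by
    intro v hv
    rw [hpart]
    exact hv
  have hPX : P ⊆ A ∪ B := by
    intro v hv; rw [← hpart]; exact Or.inl (Or.inl (Or.inl hv))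
  have hQX : Q ⊆ A ∪ B := by
    intro v hv; rw [← hpart]; exact Or.inl (Or.inl (Or.inr hv))
  have hRX : R ⊆ A ∪ B := fun v hv => Or.inl (hRA hv)
  have hSX' : S ⊆ A ∪ B := fun v hv => Or.inr (hSB hv)
  have hdXK : ∀ {U W : Set V}, U ⊆ A ∪ B → W ⊆ C ∪ D ∪ E ∪ F → Disjoint U W :=
    fun hU hW => Set.disjoint_left.mpr fun v hv hv' => hKX v (hW hv') (hU hv)
  have hCK : C ⊆ C ∪ D ∪ E ∪ F := fun v hv => Or.inl (Or.inl (Or.inl hv))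
  have hDK : D ⊆ C ∪ D ∪ E ∪ F := fun v hv => Or.inl (Or.inl (Or.inr hv))
  have hEK : E ⊆ C ∪ D ∪ E ∪ F := fun v hv => Or.inl (Or.inr hv)
  have hFK : F ⊆ C ∪ D ∪ E ∪ F := fun v hv => Or.inr hv
  obtain ⟨p0, hp0⟩ := hPQne
  have hp0X : p0 ∈ A ∪ B := by
    rcases hp0 with h | h
    · exact hPX h
    · exact hQX h
  have hp0RS : p0 ∉ R ∪ S := by
    rintro (h | h)
    · rcases hp0 with h' | h'
      · exact hPR.le_bot ⟨h', h⟩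
      · exact hQR.le_bot ⟨h', h⟩
    · rcases hp0 with h' | h'
      · exact hPS.le_bot ⟨h', h⟩
      · exact hQS.le_bot ⟨h', h⟩
  by_cases hcs : T.SComplete R S ∨ T.SAnticomplete R S
  · -- one of R, S is a homogeneous set
    have main : ∀ (R' Q1 Q2 : Set V), R' ⊆ A ∪ B → 1 < R'.ncard →
        (∀ v ∈ Q1, ∀ a ∈ R', T.SEdge v a) → (∀ v ∈ Q2, ∀ a ∈ R', T.SAnti v a) →
        (∀ v, v ∈ A ∪ B → v ∉ R' → v ∈ Q1 ∪ Q2) →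
        (∀ v ∈ C ∪ D ∪ E ∪ F, (∀ a ∈ R', T.SEdge v a) ∨ (∀ a ∈ R', T.SAnti v a)) →
        (∃ p, p ∈ A ∪ B ∧ p ∉ R') →
        ∃ X'', T.HomCut X'' ∧ X'' ⊂ A ∪ B := by
      rintro R' Q1 Q2 hR'X hR'2 hQ1 hQ2 hcov hext ⟨p, hpX, hpR⟩
      have hABne : A ∪ B ≠ Set.univ := by
        obtain ⟨c0, hc0⟩ := hCne
        intro h
        exact hKX c0 (hCK hc0) (by rw [h]; trivial)
      refine ⟨R', Or.inl ⟨hR'2, ?_, ?_⟩, ?_⟩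
      · have hne : R' ≠ Set.univ := fun h =>
          hABne (Set.eq_univ_of_univ_subset (h ▸ hR'X))
        have := Set.ncard_lt_ncard (Set.ssubset_univ_iff.mpr hne) Set.finite_univ
        rwa [Set.ncard_univ] at this
      · intro v hv
        by_cases hvX : v ∈ A ∪ B
        · rcases hcov v hvX hv with h | h
          · exact Or.inl (hQ1 v h)
          · exact Or.inr (hQ2 v h)
        · exact hext v (hXK v hvX)
      · exact hR'X.ssubset_of_ne (fun he => hpR (he.symm ▸ hpX))
    have hRS2 : 2 ≤ R.ncard ∨ 2 ≤ S.ncard := by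
      have := Set.ncard_union_le R S
      omega
    have hextR : ∀ v ∈ C ∪ D ∪ E ∪ F, (∀ a ∈ R, T.SEdge v a) ∨ (∀ a ∈ R, T.SAnti v a) := by
      rintro v (((hv | hv) | hv) | hv)
      · exact Or.inl fun a ha => T.sedge_symm (hAc a (hRA ha) v (Or.inl hv))
      · exact Or.inr fun a ha => T.santi_symm (hAa a (hRA ha) v (Or.inl hv))
      · exact Or.inl fun a ha => T.sedge_symm (hAc a (hRA ha) v (Or.inr hv))
      · exact Or.inr fun a ha => T.santi_symm (hAa a (hRA ha) v (Or.inr hv))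
    have hextS : ∀ v ∈ C ∪ D ∪ E ∪ F, (∀ a ∈ S, T.SEdge v a) ∨ (∀ a ∈ S, T.SAnti v a) := by
      rintro v (((hv | hv) | hv) | hv)
      · exact Or.inr fun a ha => T.santi_symm (hBa a (hSB ha) v (Or.inl hv))
      · exact Or.inl fun a ha => T.sedge_symm (hBc a (hSB ha) v (Or.inl hv))
      · exact Or.inl fun a ha => T.sedge_symm (hBc a (hSB ha) v (Or.inr hv))
      · exact Or.inr fun a ha => T.santi_symm (hBa a (hSB ha) v (Or.inr hv))
    rcases hRS2 with h2 | h2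
    · -- use R
      have hpS : ∃ p, p ∈ A ∪ B ∧ p ∉ R := ⟨p0, hp0X, fun h => hp0RS (Or.inl h)⟩
      rcases hcs with hc | hc
      · refine main R (P ∪ S) Q hRX (by omega) ?_ ?_ ?_ hextR hpS
        · rintro v (hv | hv) a ha
          · exact hPcR v hv a ha
          · exact T.sedge_symm (hc a ha v hv)
        · exact fun v hv a ha => hQaR v hv a ha
        · intro v hvX hvR
          rcases hcover v hvX with ((h | h) | h) | h
          · exact Or.inl (Or.inl h)
          · exact Or.inr h
          · exact absurd h hvR
          · exact Or.inl (Or.inr h)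
      · refine main R P (Q ∪ S) hRX (by omega) ?_ ?_ ?_ hextR hpS
        · exact fun v hv a ha => hPcR v hv a ha
        · rintro v (hv | hv) a ha
          · exact hQaR v hv a ha
          · exact T.santi_symm (hc a ha v hv)
        · intro v hvX hvR
          rcases hcover v hvX with ((h | h) | h) | h
          · exact Or.inl h
          · exact Or.inr (Or.inl h)
          · exact absurd h hvR
          · exact Or.inr (Or.inr h)
    · -- use S
      have hpS : ∃ p, p ∈ A ∪ B ∧ p ∉ S := ⟨p0, hp0X, fun h => hp0RS (Or.inr h)⟩
      rcases hcs with hc | hc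
      · refine main S (Q ∪ R) P hSX' (by omega) ?_ ?_ ?_ hextS hpS
        · rintro v (hv | hv) a ha
          · exact hQcS v hv a ha
          · exact hc v hv a ha
        · exact fun v hv a ha => hPaS v hv a ha
        · intro v hvX hvS
          rcases hcover v hvX with ((h | h) | h) | h
          · exact Or.inr h
          · exact Or.inl (Or.inl h)
          · exact Or.inl (Or.inr h)
          · exact absurd h hvS
      · refine main S Q (P ∪ R) hSX' (by omega) ?_ ?_ ?_ hextS hpS
        · exact fun v hv a ha => hQcS v hv a ha
        · rintro v (hv | hv) a ha
          · exact hPaS v hv a ha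
          · exact hc v hv a ha
        · intro v hvX hvS
          rcases hcover v hvX with ((h | h) | h) | h
          · exact Or.inr (Or.inl h)
          · exact Or.inl h
          · exact Or.inr (Or.inr h)
          · exact absurd h hvS
  · -- (R, S) is a proper homogeneous pair
    push_neg at hcs
    obtain ⟨hnsc, hnsa⟩ := hcs
    obtain ⟨c0, hc0⟩ := hCne
    obtain ⟨d0, hd0⟩ := hDne
    refine ⟨R ∪ S, Or.inr ⟨R, S, rfl, ⟨P ∪ C, Q ∪ D, E, F, ?_, ⟨c0, Or.inr hc0⟩,
      ⟨d0, Or.inr hd0⟩⟩⟩, ?_⟩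
    · refine ⟨(nonempty_of_not_scomplete hnsc).1, (nonempty_of_not_scomplete hnsc).2,
        hRS, ?_, ?_, ?_, ?_, ?_, ?_, ?_, ?_, ?_, ?_, ?_, hnsc, hnsa, hRS3, ?_⟩
      · -- Disjoint (P ∪ C) (Q ∪ D)
        refine Set.disjoint_union_left.mpr ⟨Set.disjoint_union_right.mpr ⟨hPQ, ?_⟩,
          Set.disjoint_union_right.mpr ⟨(hdXK hQX hCK).symm, hCD⟩⟩
        exact hdXK hPX hDK
      · exact Set.disjoint_union_left.mpr ⟨hdXK hPX hEK, hCE⟩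
      · exact Set.disjoint_union_left.mpr ⟨hdXK hPX hFK, hCF⟩
      · exact Set.disjoint_union_left.mpr ⟨hdXK hQX hEK, hDE⟩
      · exact Set.disjoint_union_left.mpr ⟨hdXK hQX hFK, hDF⟩
      · exact hEF
      · -- union equality
        ext v
        simp only [Set.mem_union, Set.mem_compl_iff]
        constructor
        · rintro ((((hv | hv) | (hv | hv)) | hv) | hv) <;> intro hRS'
          · rcases hRS' with h | h
            · exact hPR.le_bot ⟨hv, h⟩
            · exact hPS.le_bot ⟨hv, h⟩
          · exact hKX v (hCK hv) (by rcases hRS' with h | h; exacts [hRX h, hSX' h])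
          · rcases hRS' with h | h
            · exact hQR.le_bot ⟨hv, h⟩
            · exact hQS.le_bot ⟨hv, h⟩
          · exact hKX v (hDK hv) (by rcases hRS' with h | h; exacts [hRX h, hSX' h])
          · exact hKX v (hEK hv) (by rcases hRS' with h | h; exacts [hRX h, hSX' h])
          · exact hKX v (hFK hv) (by rcases hRS' with h | h; exacts [hRX h, hSX' h])
        · intro hv
          by_cases hvX : v ∈ A ∪ B
          · rcases hcover v hvX with ((h | h) | h) | h
            · exact Or.inl (Or.inl (Or.inl (Or.inl h)))
            · exact Or.inl (Or.inl (Or.inr (Or.inl h)))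
            · exact absurd (Or.inl h) hv
            · exact absurd (Or.inr h) hv
          · rcases hXK v hvX with ((h | h) | h) | h
            · exact Or.inl (Or.inl (Or.inl (Or.inr h)))
            · exact Or.inl (Or.inl (Or.inr (Or.inr h)))
            · exact Or.inl (Or.inr h)
            · exact Or.inr h
      · -- SComplete R (P ∪ C ∪ E)
        rintro r hr x ((hx | hx) | hx)
        · exact T.sedge_symm (hPcR x hx r hr)
        · exact hAc r (hRA hr) x (Or.inl hx)
        · exact hAc r (hRA hr) x (Or.inr hx)
      · rintro r hr x ((hx | hx) | hx)
        · exact T.santi_symm (hQaR x hx r hr)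
        · exact hAa r (hRA hr) x (Or.inl hx)
        · exact hAa r (hRA hr) x (Or.inr hx)
      · rintro s hs x ((hx | hx) | hx)
        · exact T.sedge_symm (hQcS x hx s hs)
        · exact hBc s (hSB hs) x (Or.inl hx)
        · exact hBc s (hSB hs) x (Or.inr hx)
      · rintro s hs x ((hx | hx) | hx)
        · exact T.santi_symm (hPaS x hx s hs)
        · exact hBa s (hSB hs) x (Or.inl hx)
        · exact hBa s (hSB hs) x (Or.inr hx)
      · -- cardinality of the rest
        have hsub : C ∪ D ∪ E ∪ F ⊆ P ∪ C ∪ (Q ∪ D) ∪ E ∪ F := by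
          rintro v (((hv | hv) | hv) | hv)
          · exact Or.inl (Or.inl (Or.inl (Or.inr hv)))
          · exact Or.inl (Or.inl (Or.inr (Or.inr hv)))
          · exact Or.inl (Or.inr hv)
          · exact Or.inr hv
        have h1 := Set.ncard_le_ncard hsub (Set.toFinite _)
        have h2 := hK3
        omega
    · have hsub : R ∪ S ⊆ A ∪ B := by rintro v (h | h); exacts [hRX h, hSX' h]
      exact hsub.ssubset_of_ne fun he => hp0RS (he.symm ▸ hp0X)

end Trigraph
namespace Trigraph

lemma lemM2 {V : Type} [Fintype V] (T : Trigraph V)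
    {X A'' B'' C₂ D₂ E₂ F₂ CA AA CB AB : Set V}
    (hCAu : CA ∪ AA = Xᶜ) (hCAd : Disjoint CA AA)
    (hCBu : CB ∪ AB = Xᶜ) (hCBd : Disjoint CB AB)
    (hCAc : ∀ v ∈ CA, ∀ a ∈ A'', T.SEdge v a)
    (hAAa : ∀ v ∈ AA, ∀ a ∈ A'', T.SAnti v a)
    (hCBc : ∀ v ∈ CB, ∀ b ∈ B'', T.SEdge v b)
    (hABa : ∀ v ∈ AB, ∀ b ∈ B'', T.SAnti v b)
    (hpart : A'' ∪ B'' ∪ C₂ ∪ D₂ ∪ E₂ ∪ F₂ = X)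
    (hab : Disjoint A'' B'')
    (hac2 : Disjoint A'' C₂) (had2 : Disjoint A'' D₂)
    (hae2 : Disjoint A'' E₂) (haf2 : Disjoint A'' F₂)
    (hbc2 : Disjoint B'' C₂) (hbd2 : Disjoint B'' D₂)
    (hbe2 : Disjoint B'' E₂) (hbf2 : Disjoint B'' F₂)
    (hcd2 : Disjoint C₂ D₂) (hce2 : Disjoint C₂ E₂) (hcf2 : Disjoint C₂ F₂)
    (hde2 : Disjoint D₂ E₂) (hdf2 : Disjoint D₂ F₂) (hef2 : Disjoint E₂ F₂)
    (hic : T.SComplete A'' (C₂ ∪ E₂)) (hia : T.SAnticomplete A'' (D₂ ∪ F₂))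
    (hjc : T.SComplete B'' (D₂ ∪ E₂)) (hja : T.SAnticomplete B'' (C₂ ∪ F₂))
    (hnsc : ¬ T.SComplete A'' B'') (hnsa : ¬ T.SAnticomplete A'' B'')
    (h3 : 3 ≤ (A'' ∪ B'').ncard)
    (hXc3 : 3 ≤ Xᶜ.ncard)
    (hinl : (C₂ ∪ D₂ ∪ E₂ ∪ F₂).Nonempty)
    (hCne : (C₂ ∪ (CA ∩ AB)).Nonempty) (hDne : (D₂ ∪ (AA ∩ CB)).Nonempty) :
    T.ProperHomPair A'' B'' ∧ A'' ∪ B'' ⊂ X := by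
  have hAX : A'' ⊆ X := by
    intro v hv; rw [← hpart]
    exact Or.inl (Or.inl (Or.inl (Or.inl (Or.inl hv))))
  have hBX : B'' ⊆ X := by
    intro v hv; rw [← hpart]
    exact Or.inl (Or.inl (Or.inl (Or.inl (Or.inr hv))))
  have hCX : C₂ ⊆ X := by
    intro v hv; rw [← hpart]; exact Or.inl (Or.inl (Or.inl (Or.inr hv)))
  have hDX : D₂ ⊆ X := by
    intro v hv; rw [← hpart]; exact Or.inl (Or.inl (Or.inr hv))
  have hEX : E₂ ⊆ X := by
    intro v hv; rw [← hpart]; exact Or.inl (Or.inr hv)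
  have hFX : F₂ ⊆ X := by
    intro v hv; rw [← hpart]; exact Or.inr hv
  have hCAX : CA ⊆ Xᶜ := by
    intro v hv; rw [← hCAu]; exact Or.inl hv
  have hAAX : AA ⊆ Xᶜ := by
    intro v hv; rw [← hCAu]; exact Or.inr hv
  have hCBX : CB ⊆ Xᶜ := by
    intro v hv; rw [← hCBu]; exact Or.inl hv
  have hABX : AB ⊆ Xᶜ := by
    intro v hv; rw [← hCBu]; exact Or.inr hv
  have hdXc : ∀ {U W : Set V}, U ⊆ X → W ⊆ Xᶜ → Disjoint U W :=
    fun hU hW => Set.disjoint_left.mpr fun v hv hv' => (hW hv') (hU hv)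
  have hcoverX : ∀ v ∈ X, v ∈ A'' ∪ B'' ∪ C₂ ∪ D₂ ∪ E₂ ∪ F₂ := by
    intro v hv; rw [hpart]; exact hv
  have hcoverA : ∀ v ∈ Xᶜ, v ∈ CA ∪ AA := by
    intro v hv; rw [hCAu]; exact hv
  have hcoverB : ∀ v ∈ Xᶜ, v ∈ CB ∪ AB := by
    intro v hv; rw [hCBu]; exact hv
  constructor
  · refine ⟨C₂ ∪ CA ∩ AB, D₂ ∪ AA ∩ CB, E₂ ∪ CA ∩ CB, F₂ ∪ AA ∩ AB,
      ⟨(nonempty_of_not_scomplete hnsc).1, (nonempty_of_not_scomplete hnsc).2, hab,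
       ?_, ?_, ?_, ?_, ?_, ?_, ?_, ?_, ?_, ?_, ?_, hnsc, hnsa, h3, ?_⟩, hCne, hDne⟩
    · -- C'' vs D''
      refine Set.disjoint_union_left.mpr ⟨Set.disjoint_union_right.mpr ⟨hcd2, ?_⟩,
        Set.disjoint_union_right.mpr ⟨(hdXc hDX ((Set.inter_subset_left).trans hCAX)).symm, ?_⟩⟩
      · exact hdXc hCX ((Set.inter_subset_left).trans hAAX)
      · exact Disjoint.mono Set.inter_subset_left Set.inter_subset_left hCAd
    · -- C'' vs E''
      refine Set.disjoint_union_left.mpr ⟨Set.disjoint_union_right.mpr ⟨hce2, ?_⟩,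
        Set.disjoint_union_right.mpr ⟨(hdXc hEX ((Set.inter_subset_left).trans hCAX)).symm, ?_⟩⟩
      · exact hdXc hCX ((Set.inter_subset_left).trans hCAX)
      · exact Disjoint.mono Set.inter_subset_right Set.inter_subset_right hCBd.symm
    · -- C'' vs F''
      refine Set.disjoint_union_left.mpr ⟨Set.disjoint_union_right.mpr ⟨hcf2, ?_⟩,
        Set.disjoint_union_right.mpr ⟨(hdXc hFX ((Set.inter_subset_left).trans hCAX)).symm, ?_⟩⟩
      · exact hdXc hCX ((Set.inter_subset_left).trans hAAX)
      · exact Disjoint.mono Set.inter_subset_left Set.inter_subset_left hCAd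
    · -- D'' vs E''
      refine Set.disjoint_union_left.mpr ⟨Set.disjoint_union_right.mpr ⟨hde2, ?_⟩,
        Set.disjoint_union_right.mpr ⟨(hdXc hEX ((Set.inter_subset_left).trans hAAX)).symm, ?_⟩⟩
      · exact hdXc hDX ((Set.inter_subset_left).trans hCAX)
      · exact Disjoint.mono Set.inter_subset_left Set.inter_subset_left hCAd.symm
    · -- D'' vs F''
      refine Set.disjoint_union_left.mpr ⟨Set.disjoint_union_right.mpr ⟨hdf2, ?_⟩,
        Set.disjoint_union_right.mpr ⟨(hdXc hFX ((Set.inter_subset_left).trans hAAX)).symm, ?_⟩⟩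
      · exact hdXc hDX ((Set.inter_subset_left).trans hAAX)
      · exact Disjoint.mono Set.inter_subset_right Set.inter_subset_right hCBd
    · -- E'' vs F''
      refine Set.disjoint_union_left.mpr ⟨Set.disjoint_union_right.mpr ⟨hef2, ?_⟩,
        Set.disjoint_union_right.mpr ⟨(hdXc hFX ((Set.inter_subset_left).trans hCAX)).symm, ?_⟩⟩
      · exact hdXc hEX ((Set.inter_subset_left).trans hAAX)
      · exact Disjoint.mono Set.inter_subset_left Set.inter_subset_left hCAd
    · -- union = complement
      ext v
      simp only [Set.mem_union, Set.mem_compl_iff, Set.mem_inter_iff]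
      constructor
      · rintro ((((hv | ⟨hv1, hv2⟩) | (hv | ⟨hv1, hv2⟩)) | (hv | ⟨hv1, hv2⟩)) |
          (hv | ⟨hv1, hv2⟩)) <;> rintro (h | h)
        · exact hac2.le_bot ⟨h, hv⟩
        · exact hbc2.le_bot ⟨h, hv⟩
        · exact hCAX hv1 (hAX h)
        · exact hCAX hv1 (hBX h)
        · exact had2.le_bot ⟨h, hv⟩
        · exact hbd2.le_bot ⟨h, hv⟩
        · exact hAAX hv1 (hAX h)
        · exact hAAX hv1 (hBX h)
        · exact hae2.le_bot ⟨h, hv⟩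
        · exact hbe2.le_bot ⟨h, hv⟩
        · exact hCAX hv1 (hAX h)
        · exact hCAX hv1 (hBX h)
        · exact haf2.le_bot ⟨h, hv⟩
        · exact hbf2.le_bot ⟨h, hv⟩
        · exact hAAX hv1 (hAX h)
        · exact hAAX hv1 (hBX h)
      · intro hv
        by_cases hvX : v ∈ X
        · rcases hcoverX v hvX with (((((h | h) | h) | h) | h) | h)
          · exact absurd (Or.inl h) hv
          · exact absurd (Or.inr h) hv
          · exact Or.inl (Or.inl (Or.inl (Or.inl h)))
          · exact Or.inl (Or.inl (Or.inr (Or.inl h)))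
          · exact Or.inl (Or.inr (Or.inl h))
          · exact Or.inr (Or.inl h)
        · rcases hcoverA v hvX with h1 | h1 <;> rcases hcoverB v hvX with h2 | h2
          · exact Or.inl (Or.inr (Or.inr ⟨h1, h2⟩))
          · exact Or.inl (Or.inl (Or.inl (Or.inr ⟨h1, h2⟩)))
          · exact Or.inl (Or.inl (Or.inr (Or.inr ⟨h1, h2⟩)))
          · exact Or.inr (Or.inr ⟨h1, h2⟩)
    · -- SComplete A'' (C'' ∪ E'')
      rintro a ha x ((hx | hx) | (hx | hx))
      · exact hic a ha x (Or.inl hx)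
      · exact T.sedge_symm (hCAc x hx.1 a ha)
      · exact hic a ha x (Or.inr hx)
      · exact T.sedge_symm (hCAc x hx.1 a ha)
    · rintro a ha x ((hx | hx) | (hx | hx))
      · exact hia a ha x (Or.inl hx)
      · exact T.santi_symm (hAAa x hx.1 a ha)
      · exact hia a ha x (Or.inr hx)
      · exact T.santi_symm (hAAa x hx.1 a ha)
    · rintro b hb x ((hx | hx) | (hx | hx))
      · exact hjc b hb x (Or.inl hx)
      · exact T.sedge_symm (hCBc x hx.2 b hb)
      · exact hjc b hb x (Or.inr hx)
      · exact T.sedge_symm (hCBc x hx.2 b hb)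
    · rintro b hb x ((hx | hx) | (hx | hx))
      · exact hja b hb x (Or.inl hx)
      · exact T.santi_symm (hABa x hx.2 b hb)
      · exact hja b hb x (Or.inr hx)
      · exact T.santi_symm (hABa x hx.2 b hb)
    · -- final cardinality
      have hsub : Xᶜ ⊆ C₂ ∪ CA ∩ AB ∪ (D₂ ∪ AA ∩ CB) ∪ (E₂ ∪ CA ∩ CB) ∪ (F₂ ∪ AA ∩ AB) := by
        intro v hv
        rcases hcoverA v hv with h1 | h1 <;> rcases hcoverB v hv with h2 | h2
        · exact Or.inl (Or.inr (Or.inr ⟨h1, h2⟩))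
        · exact Or.inl (Or.inl (Or.inl (Or.inr ⟨h1, h2⟩)))
        · exact Or.inl (Or.inl (Or.inr (Or.inr ⟨h1, h2⟩)))
        · exact Or.inr (Or.inr ⟨h1, h2⟩)
      have h1 := Set.ncard_le_ncard hsub (Set.toFinite _)
      omega
  · -- strictness
    have hsub : A'' ∪ B'' ⊆ X := by rintro v (h | h); exacts [hAX h, hBX h]
    obtain ⟨x0, hx0⟩ := hinl
    have hx0X : x0 ∈ X := by
      rcases hx0 with ((h | h) | h) | h
      exacts [hCX h, hDX h, hEX h, hFX h]
    have hx0n : x0 ∉ A'' ∪ B'' := by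
      rintro (h | h) <;> rcases hx0 with ((h' | h') | h') | h'
      · exact hac2.le_bot ⟨h, h'⟩
      · exact had2.le_bot ⟨h, h'⟩
      · exact hae2.le_bot ⟨h, h'⟩
      · exact haf2.le_bot ⟨h, h'⟩
      · exact hbc2.le_bot ⟨h, h'⟩
      · exact hbd2.le_bot ⟨h, h'⟩
      · exact hbe2.le_bot ⟨h, h'⟩
      · exact hbf2.le_bot ⟨h, h'⟩
    exact hsub.ssubset_of_ne fun he => hx0n (he.symm ▸ hx0X)

end Trigraph
open Trigraph in
/-- If `(X, Y)` is a minimally-sided homogeneous cut of a trigraph `T`, then the block of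
decomposition `T_X` has no homogeneous cut (in either of the two cases defining the
block `T_X`). -/
theorem blockX_no_homCut_of_minSided {V : Type} [Fintype V] [DecidableEq V]
    (T : Trigraph V) (X : Set V) (hmin : T.MinSidedHomCut X) :
    (T.HomSet X → ∀ X' : Set ↥X, ¬ (T.induce X).HomCut X') ∧
    (∀ A B : Set V, X = A ∪ B → T.ProperHomPair A B →
      ∀ X' : Set (↥(A ∪ B) ⊕ Fin 2), ¬ (T.blockXPair A B).HomCut X') := by
  obtain ⟨hcut, hminimal⟩ := hmin
  constructor
  · intro hX X' hX'
    obtain ⟨hX1, hX2, hX3⟩ := hX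
    have hXne : X.Nonempty := Set.nonempty_of_ncard_ne_zero (by omega)
    rcases hX' with ⟨h1, h2, h3⟩ |
      ⟨A', B', hX'AB, C', D', E', F', hsp, hC'ne, hD'ne⟩
    · -- X' is a homogeneous set of T[X]
      have hncard : (Subtype.val '' X').ncard = X'.ncard :=
        Set.ncard_image_of_injective _ Subtype.val_injective
      have hsubX : Subtype.val '' X' ⊆ X := by rintro v ⟨u, hu, rfl⟩; exact u.2
      have hlt : (Subtype.val '' X').ncard < X.ncard := by
        rw [hncard]
        rwa [Nat.card_coe_set_eq] at h2
      have hhs : T.HomSet (Subtype.val '' X') := by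
        refine ⟨by rw [hncard]; exact h1, lt_trans hlt hX2, ?_⟩
        intro v hv
        by_cases hvX : v ∈ X
        · have hnot : (⟨v, hvX⟩ : ↥X) ∉ X' := fun h => hv ⟨_, h, rfl⟩
          rcases h3 ⟨v, hvX⟩ hnot with h | h
          · exact Or.inl (by rintro a ⟨u, hu, rfl⟩
                             exact (T.induce_sedge_iff _ _).1 (h u hu))
          · exact Or.inr (by rintro a ⟨u, hu, rfl⟩
                             exact (T.induce_santi_iff _ _).1 (h u hu))
        · rcases hX3 v hvX with h | h
          · exact Or.inl fun a ha => h a (hsubX ha)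
          · exact Or.inr fun a ha => h a (hsubX ha)
      exact hminimal _ (Or.inl hhs)
        (hsubX.ssubset_of_ne fun he => by rw [he] at hlt; exact lt_irrefl _ hlt)
    · -- X' comes from a proper homogeneous pair of T[X]
      obtain ⟨hA'ne, hB'ne, hA'B', hC'D', hC'E', hC'F', hD'E', hD'F', hE'F',
        hU', hA'c, hA'a, hB'c, hB'a, hnsc', hnsa', h3', hK3'⟩ := hsp
      set Pc : Set V := {v | v ∉ X ∧ ∀ a ∈ X, T.SEdge v a} with hPcdef
      set Pa : Set V := {v | v ∉ X ∧ ∀ a ∈ X, T.SAnti v a} with hPadef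
      have hPcPa : ∀ v, v ∉ X → v ∈ Pc ∪ Pa := by
        intro v hv
        rcases hX3 v hv with h | h
        · exact Or.inl ⟨hv, h⟩
        · exact Or.inr ⟨hv, h⟩
      have hPcPad : Disjoint Pc Pa := by
        rw [Set.disjoint_left]
        rintro v ⟨hv, hc⟩ ⟨-, ha⟩
        obtain ⟨x0, hx0⟩ := hXne
        have hh1 := (hc x0 hx0).2
        have hh2 := (ha x0 hx0).2
        omega
      have himgd : ∀ {S S' : Set ↥X}, Disjoint S S' →
          Disjoint (Subtype.val '' S) (Subtype.val '' S') := by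
        intro S S' h
        rw [Set.disjoint_left] at h ⊢
        rintro v ⟨u, hu, rfl⟩ ⟨u', hu', he⟩
        exact h hu (by rwa [show u' = u from Subtype.ext he] at hu')
      have himgX : ∀ (S : Set ↥X), Subtype.val '' S ⊆ X := by
        rintro S v ⟨u, -, rfl⟩; exact u.2
      have himgPc : ∀ (S : Set ↥X), Disjoint (Subtype.val '' S) Pc :=
        fun S => Set.disjoint_left.mpr (by rintro v ⟨u, -, rfl⟩ ⟨hn, -⟩; exact hn u.2)
      have himgPa : ∀ (S : Set ↥X), Disjoint (Subtype.val '' S) Pa :=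
        fun S => Set.disjoint_left.mpr (by rintro v ⟨u, -, rfl⟩ ⟨hn, -⟩; exact hn u.2)
      have hKni : ∀ u : ↥X, u ∈ C' ∪ D' ∪ E' ∪ F' → u ∉ A' ∪ B' := by
        intro u h
        rw [hU'] at h
        exact h
      have hXKi : ∀ u : ↥X, u ∉ A' ∪ B' → u ∈ C' ∪ D' ∪ E' ∪ F' := by
        intro u h
        rw [hU']
        exact h
      have hdA'C' : Disjoint A' C' := Set.disjoint_left.mpr
        fun u hu hu' => hKni u (Or.inl (Or.inl (Or.inl hu'))) (Or.inl hu)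
      have hdA'D' : Disjoint A' D' := Set.disjoint_left.mpr
        fun u hu hu' => hKni u (Or.inl (Or.inl (Or.inr hu'))) (Or.inl hu)
      have hdA'E' : Disjoint A' E' := Set.disjoint_left.mpr
        fun u hu hu' => hKni u (Or.inl (Or.inr hu')) (Or.inl hu)
      have hdA'F' : Disjoint A' F' := Set.disjoint_left.mpr
        fun u hu hu' => hKni u (Or.inr hu') (Or.inl hu)
      have hdB'C' : Disjoint B' C' := Set.disjoint_left.mpr
        fun u hu hu' => hKni u (Or.inl (Or.inl (Or.inl hu'))) (Or.inr hu)
      have hdB'D' : Disjoint B' D' := Set.disjoint_left.mpr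
        fun u hu hu' => hKni u (Or.inl (Or.inl (Or.inr hu'))) (Or.inr hu)
      have hdB'E' : Disjoint B' E' := Set.disjoint_left.mpr
        fun u hu hu' => hKni u (Or.inl (Or.inr hu')) (Or.inr hu)
      have hdB'F' : Disjoint B' F' := Set.disjoint_left.mpr
        fun u hu hu' => hKni u (Or.inr hu') (Or.inr hu)
      have hcut2 : T.HomCut (Subtype.val '' A' ∪ Subtype.val '' B') := by
        refine Or.inr ⟨_, _, rfl, Subtype.val '' C', Subtype.val '' D',
          Subtype.val '' E' ∪ Pc, Subtype.val '' F' ∪ Pa,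
          ⟨hA'ne.image _, hB'ne.image _, himgd hA'B', himgd hC'D', ?_, ?_, ?_, ?_, ?_,
           ?_, ?_, ?_, ?_, ?_, ?_, ?_, ?_, ?_⟩,
          hC'ne.image _, hD'ne.image _⟩
        · exact Set.disjoint_union_right.mpr ⟨himgd hC'E', himgPc _⟩
        · exact Set.disjoint_union_right.mpr ⟨himgd hC'F', himgPa _⟩
        · exact Set.disjoint_union_right.mpr ⟨himgd hD'E', himgPc _⟩
        · exact Set.disjoint_union_right.mpr ⟨himgd hD'F', himgPa _⟩
        · refine Set.disjoint_union_left.mpr ⟨Set.disjoint_union_right.mpr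
            ⟨himgd hE'F', himgPa _⟩, Set.disjoint_union_right.mpr ⟨(himgPc _).symm, hPcPad⟩⟩
        · -- union = complement
          ext v
          simp only [Set.mem_union, Set.mem_compl_iff]
          constructor
          · rintro (((⟨u, hu, rfl⟩ | ⟨u, hu, rfl⟩) | (⟨u, hu, rfl⟩ | hv)) |
              (⟨u, hu, rfl⟩ | hv)) <;> rintro (h' | h')
            · exact (himgd hdA'C').le_bot ⟨h', ⟨u, hu, rfl⟩⟩
            · exact (himgd hdB'C').le_bot ⟨h', ⟨u, hu, rfl⟩⟩
            · exact (himgd hdA'D').le_bot ⟨h', ⟨u, hu, rfl⟩⟩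
            · exact (himgd hdB'D').le_bot ⟨h', ⟨u, hu, rfl⟩⟩
            · exact (himgd hdA'E').le_bot ⟨h', ⟨u, hu, rfl⟩⟩
            · exact (himgd hdB'E').le_bot ⟨h', ⟨u, hu, rfl⟩⟩
            · exact hv.1 (himgX A' h')
            · exact hv.1 (himgX B' h')
            · exact (himgd hdA'F').le_bot ⟨h', ⟨u, hu, rfl⟩⟩
            · exact (himgd hdB'F').le_bot ⟨h', ⟨u, hu, rfl⟩⟩
            · exact hv.1 (himgX A' h')
            · exact hv.1 (himgX B' h')
          · intro hv
            by_cases hvX : v ∈ X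
            · have hnot : (⟨v, hvX⟩ : ↥X) ∉ A' ∪ B' := by
                rintro (h | h)
                · exact hv (Or.inl ⟨_, h, rfl⟩)
                · exact hv (Or.inr ⟨_, h, rfl⟩)
              rcases hXKi _ hnot with ((h | h) | h) | h
              · exact Or.inl (Or.inl (Or.inl ⟨_, h, rfl⟩))
              · exact Or.inl (Or.inl (Or.inr ⟨_, h, rfl⟩))
              · exact Or.inl (Or.inr (Or.inl ⟨_, h, rfl⟩))
              · exact Or.inr (Or.inl ⟨_, h, rfl⟩)
            · rcases hPcPa v hvX with h | h
              · exact Or.inl (Or.inr (Or.inr h))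
              · exact Or.inr (Or.inr h)
        · -- SComplete A'' (C'' ∪ E'')
          rintro a ⟨ua, hua, rfl⟩ x (⟨ux, hux, rfl⟩ | (⟨ux, hux, rfl⟩ | hx))
          · exact (T.induce_sedge_iff _ _).1 (hA'c _ hua _ (Or.inl hux))
          · exact (T.induce_sedge_iff _ _).1 (hA'c _ hua _ (Or.inr hux))
          · exact T.sedge_symm (hx.2 _ ua.2)
        · rintro a ⟨ua, hua, rfl⟩ x (⟨ux, hux, rfl⟩ | (⟨ux, hux, rfl⟩ | hx))
          · exact (T.induce_santi_iff _ _).1 (hA'a _ hua _ (Or.inl hux))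
          · exact (T.induce_santi_iff _ _).1 (hA'a _ hua _ (Or.inr hux))
          · exact T.santi_symm (hx.2 _ ua.2)
        · rintro b ⟨ub, hub, rfl⟩ x (⟨ux, hux, rfl⟩ | (⟨ux, hux, rfl⟩ | hx))
          · exact (T.induce_sedge_iff _ _).1 (hB'c _ hub _ (Or.inl hux))
          · exact (T.induce_sedge_iff _ _).1 (hB'c _ hub _ (Or.inr hux))
          · exact T.sedge_symm (hx.2 _ ub.2)
        · rintro b ⟨ub, hub, rfl⟩ x (⟨ux, hux, rfl⟩ | (⟨ux, hux, rfl⟩ | hx))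
          · exact (T.induce_santi_iff _ _).1 (hB'a _ hub _ (Or.inl hux))
          · exact (T.induce_santi_iff _ _).1 (hB'a _ hub _ (Or.inr hux))
          · exact T.santi_symm (hx.2 _ ub.2)
        · intro hcc
          apply hnsc'
          intro a ha b hb
          exact (T.induce_sedge_iff _ _).2 (hcc _ ⟨a, ha, rfl⟩ _ ⟨b, hb, rfl⟩)
        · intro hcc
          apply hnsa'
          intro a ha b hb
          exact (T.induce_santi_iff _ _).2 (hcc _ ⟨a, ha, rfl⟩ _ ⟨b, hb, rfl⟩)
        · rw [← Set.image_union, Set.ncard_image_of_injective _ Subtype.val_injective]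
          exact h3'
        · have hsub : Subtype.val '' (C' ∪ D' ∪ E' ∪ F') ⊆
              Subtype.val '' C' ∪ Subtype.val '' D' ∪ (Subtype.val '' E' ∪ Pc) ∪
                (Subtype.val '' F' ∪ Pa) := by
            rintro v ⟨u, (((h | h) | h) | h), rfl⟩
            · exact Or.inl (Or.inl (Or.inl ⟨u, h, rfl⟩))
            · exact Or.inl (Or.inl (Or.inr ⟨u, h, rfl⟩))
            · exact Or.inl (Or.inr (Or.inl ⟨u, h, rfl⟩))
            · exact Or.inr (Or.inl ⟨u, h, rfl⟩)
          have hh1 := Set.ncard_le_ncard hsub (Set.toFinite _)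
          have hh2 : (Subtype.val '' (C' ∪ D' ∪ E' ∪ F')).ncard =
              (C' ∪ D' ∪ E' ∪ F').ncard :=
            Set.ncard_image_of_injective _ Subtype.val_injective
          omega
      have hss2 : Subtype.val '' A' ∪ Subtype.val '' B' ⊂ X := by
        have hsub : Subtype.val '' A' ∪ Subtype.val '' B' ⊆ X := by
          rintro v (h | h)
          · exact himgX A' h
          · exact himgX B' h
        obtain ⟨u0, hu0⟩ := hC'ne
        refine hsub.ssubset_of_ne fun he => ?_
        have hu0X : (u0 : V) ∈ Subtype.val '' A' ∪ Subtype.val '' B' := by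
          rw [he]; exact u0.2
        rcases hu0X with h | h
        · exact (himgd hdA'C').le_bot ⟨h, ⟨u0, hu0, rfl⟩⟩
        · exact (himgd hdB'C').le_bot ⟨h, ⟨u0, hu0, rfl⟩⟩
      exact hminimal _ hcut2 hss2
  · intro A B hXAB hAB X' hX'
    obtain ⟨C, D, E, F, hsp, hCne, hDne⟩ := hAB
    obtain ⟨hAne, hBne, hABd, hCD, hCE, hCF, hDE, hDF, hEF, hU, hAc, hAa, hBc, hBa,
      hnsc, hnsa, h3, hK3⟩ := hsp
    subst hXAB
    have hXK : ∀ v, v ∉ A ∪ B → v ∈ C ∪ D ∪ E ∪ F := by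
      intro v hv; rw [hU]; exact hv
    have hKX : ∀ v ∈ C ∪ D ∪ E ∪ F, v ∉ A ∪ B := by
      intro v hv; rw [hU] at hv; exact hv
    have hXc3 : 3 ≤ (A ∪ B)ᶜ.ncard := by rw [← hU]; exact hK3
    have hABmem : ∀ u : ↥(A ∪ B), ((u : V) ∈ A ∧ (u : V) ∉ B) ∨
        ((u : V) ∈ B ∧ (u : V) ∉ A) := by
      intro u
      rcases u.2 with h | h
      · exact Or.inl ⟨h, fun hb => hABd.le_bot ⟨h, hb⟩⟩
      · exact Or.inr ⟨h, fun ha => hABd.le_bot ⟨ha, h⟩⟩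
    obtain ⟨c0, hc0⟩ := hCne
    obtain ⟨d0, hd0⟩ := hDne
    rcases hX' with ⟨h1', h2', h3'⟩ |
      ⟨A', B', hX'AB, C', D', E', F', hsp', hC'ne, hD'ne⟩
    · -- X' is a homogeneous set of the block
      by_cases hc : Sum.inr 0 ∈ X'
      · have hd : Sum.inr 1 ∈ X' := by
          by_contra hdn
          rcases h3' _ hdn with h | h
          · have hh := (h _ hc).2
            rw [T.block_θ_rr A B] at hh
            omega
          · have hh := (h _ hc).2
            rw [T.block_θ_rr A B] at hh
            omega
        have huniv : X' = Set.univ := by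
          rw [Set.eq_univ_iff_forall]
          rintro (u | i)
          · by_contra hun
            rcases h3' _ hun with h | h
            · have hh0 := (T.block_sedge_c_iff A B u).1 (Trigraph.sedge_symm _ (h _ hc))
              have hh1 := (T.block_sedge_d_iff A B u).1 (Trigraph.sedge_symm _ (h _ hd))
              exact hABd.le_bot ⟨hh0, hh1⟩
            · have hh0 := (T.block_santi_c_iff A B u).1 (Trigraph.santi_symm _ (h _ hc))
              have hh1 := (T.block_santi_d_iff A B u).1 (Trigraph.santi_symm _ (h _ hd))
              rcases u.2 with h' | h'
              · exact hh0 h'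
              · exact hh1 h'
          · rcases Trigraph.fin2cases i with rfl | rfl
            · exact hc
            · exact hd
        rw [huniv, Set.ncard_univ] at h2'
        exact lt_irrefl _ h2'
      · have hd : Sum.inr 1 ∉ X' := by
          intro hd
          rcases h3' _ hc with h | h
          · have hh := (h _ hd).2
            rw [T.block_θ_rr A B] at hh
            omega
          · have hh := (h _ hd).2
            rw [T.block_θ_rr A B] at hh
            omega
        have hrange : X' ⊆ Set.range Sum.inl := Trigraph.range_inl_of_not_mem hc hd
        have hside : (∀ u : ↥(A ∪ B), Sum.inl u ∈ X' → (u : V) ∈ A) ∨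
            (∀ u : ↥(A ∪ B), Sum.inl u ∈ X' → (u : V) ∈ B) := by
          rcases h3' _ hc with h | h
          · exact Or.inl fun u hu => (T.block_sedge_c_iff A B u).1 (h _ hu)
          · refine Or.inr fun u hu => ?_
            have hnA := (T.block_santi_c_iff A B u).1 (h _ hu)
            rcases hABmem u with ⟨hh1, -⟩ | ⟨hh1, -⟩
            · exact absurd hh1 hnA
            · exact hh1
        have hncR : (pimg X').ncard = X'.ncard := Trigraph.pimg_ncard hrange
        have finish : ∀ G KC KA : Set V,
            (∀ u : ↥(A ∪ B), Sum.inl u ∈ X' → (u : V) ∈ G) →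
            KC ∪ KA = C ∪ D ∪ E ∪ F →
            (∀ v ∈ KC, ∀ g ∈ pimg X', T.SEdge v g) →
            (∀ v ∈ KA, ∀ g ∈ pimg X', T.SAnti v g) →
            (∃ b0, b0 ∈ A ∪ B ∧ b0 ∉ G) → False := by
          rintro G KC KA hG hKCA hKC hKA ⟨b0, hb0X, hb0G⟩
          have hRG : pimg X' ⊆ G := by
            rintro v ⟨u, hu, rfl⟩; exact hG u hu
          have hRX : pimg X' ⊆ A ∪ B := Trigraph.pimg_subset _
          have hABuniv : A ∪ B ≠ Set.univ := by
            intro h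
            exact hKX c0 (Or.inl (Or.inl (Or.inl hc0))) (by rw [h]; trivial)
          refine hminimal (pimg X') (Or.inl ⟨by rw [hncR]; exact h1', ?_, ?_⟩)
            (hRX.ssubset_of_ne fun he => hb0G (hRG (he.symm ▸ hb0X)))
          · have hne : pimg X' ≠ Set.univ := fun h =>
              hABuniv (Set.eq_univ_of_univ_subset (h ▸ hRX))
            have := Set.ncard_lt_ncard (Set.ssubset_univ_iff.mpr hne) Set.finite_univ
            rwa [Set.ncard_univ] at this
          · intro v hv
            by_cases hvX : v ∈ A ∪ B
            · have hnot : Sum.inl (⟨v, hvX⟩ : ↥(A ∪ B)) ∉ X' :=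
                fun h => hv (Trigraph.mem_pimg_of h)
              rcases h3' _ hnot with h | h
              · refine Or.inl ?_
                rintro a ⟨u, hu, rfl⟩
                exact (T.block_sedge_ll_iff A B _ u).1 (h _ hu)
              · refine Or.inr ?_
                rintro a ⟨u, hu, rfl⟩
                exact (T.block_santi_ll_iff A B _ u).1 (h _ hu)
            · have hvK : v ∈ KC ∪ KA := by rw [hKCA]; exact hXK v hvX
              rcases hvK with h | h
              · exact Or.inl fun a ha => hKC v h a ha
              · exact Or.inr fun a ha => hKA v h a ha
        rcases hside with hs | hs
        · obtain ⟨b0, hb0⟩ := hBne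
          refine finish A (C ∪ E) (D ∪ F) hs
            (by ext v; simp only [Set.mem_union]; tauto) ?_ ?_
            ⟨b0, Or.inr hb0, fun hb => hABd.le_bot ⟨hb, hb0⟩⟩
          · rintro v hv g ⟨u, hu, rfl⟩
            exact T.sedge_symm (hAc _ (hs u hu) v hv)
          · rintro v hv g ⟨u, hu, rfl⟩
            exact T.santi_symm (hAa _ (hs u hu) v hv)
        · obtain ⟨a0, ha0⟩ := hAne
          refine finish B (D ∪ E) (C ∪ F) hs
            (by ext v; simp only [Set.mem_union]; tauto) ?_ ?_
            ⟨a0, Or.inl ha0, fun hb => hABd.le_bot ⟨ha0, hb⟩⟩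
          · rintro v hv g ⟨u, hu, rfl⟩
            exact T.sedge_symm (hBc _ (hs u hu) v hv)
          · rintro v hv g ⟨u, hu, rfl⟩
            exact T.santi_symm (hBa _ (hs u hu) v hv)
    · -- X' comes from a proper homogeneous pair of the block
      obtain ⟨hA'ne, hB'ne, hA'B', hC'D', hC'E', hC'F', hD'E', hD'F', hE'F',
        hU', hA'c, hA'a, hB'c, hB'a, hnsc', hnsa', h3', hK3'⟩ := hsp'
      clear hX'AB
      have hK'X : ∀ w, w ∉ A' ∪ B' → w ∈ C' ∪ D' ∪ E' ∪ F' := by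
        intro w hw; rw [hU']; exact hw
      have hXK' : ∀ w ∈ C' ∪ D' ∪ E' ∪ F', w ∉ A' ∪ B' := by
        intro w hw; rw [hU'] at hw; exact hw
      have hdA'C' : Disjoint A' C' := Set.disjoint_left.mpr
        fun u hu hu' => hXK' u (Or.inl (Or.inl (Or.inl hu'))) (Or.inl hu)
      have hdA'D' : Disjoint A' D' := Set.disjoint_left.mpr
        fun u hu hu' => hXK' u (Or.inl (Or.inl (Or.inr hu'))) (Or.inl hu)
      have hdA'E' : Disjoint A' E' := Set.disjoint_left.mpr
        fun u hu hu' => hXK' u (Or.inl (Or.inr hu')) (Or.inl hu)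
      have hdA'F' : Disjoint A' F' := Set.disjoint_left.mpr
        fun u hu hu' => hXK' u (Or.inr hu') (Or.inl hu)
      have hdB'C' : Disjoint B' C' := Set.disjoint_left.mpr
        fun u hu hu' => hXK' u (Or.inl (Or.inl (Or.inl hu'))) (Or.inr hu)
      have hdB'D' : Disjoint B' D' := Set.disjoint_left.mpr
        fun u hu hu' => hXK' u (Or.inl (Or.inl (Or.inr hu'))) (Or.inr hu)
      have hdB'E' : Disjoint B' E' := Set.disjoint_left.mpr
        fun u hu hu' => hXK' u (Or.inl (Or.inr hu')) (Or.inr hu)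
      have hdB'F' : Disjoint B' F' := Set.disjoint_left.mpr
        fun u hu hu' => hXK' u (Or.inr hu') (Or.inr hu)
      have hswW : ∀ w₁ ∈ A' ∪ B', ∀ w₂, w₂ ∉ A' ∪ B' →
          ((T.blockXPair A B).SEdge w₁ w₂ ∨ (T.blockXPair A B).SAnti w₁ w₂) := by
        intro w1 h1 w2 h2
        have h2' := hK'X _ h2
        rcases h1 with h1 | h1 <;> rcases h2' with ((h | h) | h) | h
        · exact Or.inl (hA'c _ h1 _ (Or.inl h))
        · exact Or.inr (hA'a _ h1 _ (Or.inl h))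
        · exact Or.inl (hA'c _ h1 _ (Or.inr h))
        · exact Or.inr (hA'a _ h1 _ (Or.inr h))
        · exact Or.inr (hB'a _ h1 _ (Or.inl h))
        · exact Or.inl (hB'c _ h1 _ (Or.inl h))
        · exact Or.inl (hB'c _ h1 _ (Or.inr h))
        · exact Or.inr (hB'a _ h1 _ (Or.inr h))
      have hccd : (Sum.inr 0 ∈ A' ∪ B') ↔ (Sum.inr 1 ∈ A' ∪ B') := by
        constructor
        · intro h
          by_contra hn
          rcases hswW _ h _ hn with h' | h'
          · have hh := h'.2; rw [T.block_θ_rr A B] at hh; omega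
          · have hh := h'.2; rw [T.block_θ_rr A B] at hh; omega
        · intro h
          by_contra hn
          rcases hswW _ h _ hn with h' | h'
          · have hh := h'.2; rw [T.block_θ_rr A B] at hh; omega
          · have hh := h'.2; rw [T.block_θ_rr A B] at hh; omega
      by_cases hcin : Sum.inr 0 ∈ A' ∪ B'
      · have hdin := hccd.1 hcin
        rcases hcin with hcA | hcB <;> rcases hdin with hdA | hdB
        · -- c, d ∈ A' : contradiction
          have hKempty : ∀ w, w ∉ C' ∪ D' ∪ E' ∪ F' := by
            rintro (u | i) hw
            · rcases hw with ((h | h) | h) | h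
              · exact hABd.le_bot ⟨(T.block_sedge_c_iff A B u).1 (hA'c _ hcA _ (Or.inl h)),
                  (T.block_sedge_d_iff A B u).1 (hA'c _ hdA _ (Or.inl h))⟩
              · have hh0 := (T.block_santi_c_iff A B u).1 (hA'a _ hcA _ (Or.inl h))
                have hh1 := (T.block_santi_d_iff A B u).1 (hA'a _ hdA _ (Or.inl h))
                rcases u.2 with h' | h'
                · exact hh0 h'
                · exact hh1 h'
              · exact hABd.le_bot ⟨(T.block_sedge_c_iff A B u).1 (hA'c _ hcA _ (Or.inr h)),
                  (T.block_sedge_d_iff A B u).1 (hA'c _ hdA _ (Or.inr h))⟩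
              · have hh0 := (T.block_santi_c_iff A B u).1 (hA'a _ hcA _ (Or.inr h))
                have hh1 := (T.block_santi_d_iff A B u).1 (hA'a _ hdA _ (Or.inr h))
                rcases u.2 with h' | h'
                · exact hh0 h'
                · exact hh1 h'
            · have hwn := hXK' _ hw
              rcases Trigraph.fin2cases i with rfl | rfl
              · exact hwn (Or.inl hcA)
              · exact hwn (Or.inl hdA)
          have hKe : C' ∪ D' ∪ E' ∪ F' = ∅ := Set.eq_empty_iff_forall_notMem.mpr hKempty
          rw [hKe, Set.ncard_empty] at hK3'
          omega
        · -- c ∈ A', d ∈ B' : use lemM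
          have hE'e : E' = ∅ := by
            rw [Set.eq_empty_iff_forall_notMem]
            rintro (u | i) hw
            · exact hABd.le_bot ⟨(T.block_sedge_c_iff A B u).1 (hA'c _ hcA _ (Or.inr hw)),
                (T.block_sedge_d_iff A B u).1 (hB'c _ hdB _ (Or.inr hw))⟩
            · refine hXK' _ (Or.inl (Or.inr hw)) ?_
              rcases Trigraph.fin2cases i with rfl | rfl
              · exact Or.inl hcA
              · exact Or.inr hdB
          have hF'e : F' = ∅ := by
            rw [Set.eq_empty_iff_forall_notMem]
            rintro (u | i) hw
            · have hh0 := (T.block_santi_c_iff A B u).1 (hA'a _ hcA _ (Or.inr hw))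
              have hh1 := (T.block_santi_d_iff A B u).1 (hB'a _ hdB _ (Or.inr hw))
              rcases u.2 with h' | h'
              · exact hh0 h'
              · exact hh1 h'
            · refine hXK' _ (Or.inr hw) ?_
              rcases Trigraph.fin2cases i with rfl | rfl
              · exact Or.inl hcA
              · exact Or.inr hdB
          have hpart : pimg A' ∪ pimg B' ∪ pimg C' ∪ pimg D' = A ∪ B := by
            apply Set.Subset.antisymm
            · rintro v (((h | h) | h) | h) <;> exact Trigraph.pimg_subset _ h
            · intro v hv
              by_cases h1 : Sum.inl (⟨v, hv⟩ : ↥(A ∪ B)) ∈ A' ∪ B'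
              · rcases h1 with h1 | h1
                · exact Or.inl (Or.inl (Or.inl (Trigraph.mem_pimg_of h1)))
                · exact Or.inl (Or.inl (Or.inr (Trigraph.mem_pimg_of h1)))
              · rcases hK'X _ h1 with ((h | h) | h) | h
                · exact Or.inl (Or.inr (Trigraph.mem_pimg_of h))
                · exact Or.inr (Trigraph.mem_pimg_of h)
                · rw [hE'e] at h; exact absurd h (Set.notMem_empty _)
                · rw [hF'e] at h; exact absurd h (Set.notMem_empty _)
          have hPcR : T.SComplete (pimg A') (pimg C') := by
            rintro p ⟨up, hup, rfl⟩ r ⟨ur, hur, rfl⟩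
            exact (T.block_sedge_ll_iff A B up ur).1 (hA'c _ hup _ (Or.inl hur))
          have hPaS : T.SAnticomplete (pimg A') (pimg D') := by
            rintro p ⟨up, hup, rfl⟩ r ⟨ur, hur, rfl⟩
            exact (T.block_santi_ll_iff A B up ur).1 (hA'a _ hup _ (Or.inl hur))
          have hQcS : T.SComplete (pimg B') (pimg D') := by
            rintro p ⟨up, hup, rfl⟩ r ⟨ur, hur, rfl⟩
            exact (T.block_sedge_ll_iff A B up ur).1 (hB'c _ hup _ (Or.inl hur))
          have hQaR : T.SAnticomplete (pimg B') (pimg C') := by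
            rintro p ⟨up, hup, rfl⟩ r ⟨ur, hur, rfl⟩
            exact (T.block_santi_ll_iff A B up ur).1 (hB'a _ hup _ (Or.inl hur))
          have hRA : pimg C' ⊆ A := by
            rintro v ⟨u, hu, rfl⟩
            exact (T.block_sedge_c_iff A B u).1 (hA'c _ hcA _ (Or.inl hu))
          have hSB : pimg D' ⊆ B := by
            rintro v ⟨u, hu, rfl⟩
            exact (T.block_sedge_d_iff A B u).1 (hB'c _ hdB _ (Or.inl hu))
          have hPQne : (pimg A' ∪ pimg B').Nonempty := by
            rw [← Trigraph.pimg_union]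
            exact Trigraph.pimg_nonempty_of_ncard h3'
          have hcn : Sum.inr 0 ∉ C' ∪ D' := by
            rintro (h | h)
            · exact hXK' _ (Or.inl (Or.inl (Or.inl h))) (Or.inl hcA)
            · exact hXK' _ (Or.inl (Or.inl (Or.inr h))) (Or.inl hcA)
          have hdn : Sum.inr 1 ∉ C' ∪ D' := by
            rintro (h | h)
            · exact hXK' _ (Or.inl (Or.inl (Or.inl h))) (Or.inr hdB)
            · exact hXK' _ (Or.inl (Or.inl (Or.inr h))) (Or.inr hdB)
          have hRS3 : 3 ≤ (pimg C' ∪ pimg D').ncard := by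
            rw [← Trigraph.pimg_union,
              Trigraph.pimg_ncard (Trigraph.range_inl_of_not_mem hcn hdn)]
            have hCDu : C' ∪ D' ∪ E' ∪ F' = C' ∪ D' := by rw [hE'e, hF'e]; simp
            rwa [hCDu] at hK3'
          obtain ⟨X'', hcut'', hss''⟩ := T.lemM hCD hCE hCF hDE hDF hEF hU hAc hAa hBc hBa
            ⟨c0, hc0⟩ ⟨d0, hd0⟩ hK3 hpart (Trigraph.pimg_disjoint hA'B')
            (Trigraph.pimg_disjoint hdA'C') (Trigraph.pimg_disjoint hdA'D')
            (Trigraph.pimg_disjoint hdB'C') (Trigraph.pimg_disjoint hdB'D')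
            (Trigraph.pimg_disjoint hC'D') hPcR hPaS hQcS hQaR hRA hSB hPQne hRS3
          exact hminimal X'' hcut'' hss''
        · -- c ∈ B', d ∈ A' : symmetric, use lemM
          have hE'e : E' = ∅ := by
            rw [Set.eq_empty_iff_forall_notMem]
            rintro (u | i) hw
            · exact hABd.le_bot ⟨(T.block_sedge_c_iff A B u).1 (hB'c _ hcB _ (Or.inr hw)),
                (T.block_sedge_d_iff A B u).1 (hA'c _ hdA _ (Or.inr hw))⟩
            · refine hXK' _ (Or.inl (Or.inr hw)) ?_
              rcases Trigraph.fin2cases i with rfl | rfl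
              · exact Or.inr hcB
              · exact Or.inl hdA
          have hF'e : F' = ∅ := by
            rw [Set.eq_empty_iff_forall_notMem]
            rintro (u | i) hw
            · have hh0 := (T.block_santi_c_iff A B u).1 (hB'a _ hcB _ (Or.inr hw))
              have hh1 := (T.block_santi_d_iff A B u).1 (hA'a _ hdA _ (Or.inr hw))
              rcases u.2 with h' | h'
              · exact hh0 h'
              · exact hh1 h'
            · refine hXK' _ (Or.inr hw) ?_
              rcases Trigraph.fin2cases i with rfl | rfl
              · exact Or.inr hcB
              · exact Or.inl hdA
          have hpart : pimg B' ∪ pimg A' ∪ pimg D' ∪ pimg C' = A ∪ B := by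
            apply Set.Subset.antisymm
            · rintro v (((h | h) | h) | h) <;> exact Trigraph.pimg_subset _ h
            · intro v hv
              by_cases h1 : Sum.inl (⟨v, hv⟩ : ↥(A ∪ B)) ∈ A' ∪ B'
              · rcases h1 with h1 | h1
                · exact Or.inl (Or.inl (Or.inr (Trigraph.mem_pimg_of h1)))
                · exact Or.inl (Or.inl (Or.inl (Trigraph.mem_pimg_of h1)))
              · rcases hK'X _ h1 with ((h | h) | h) | h
                · exact Or.inr (Trigraph.mem_pimg_of h)
                · exact Or.inl (Or.inr (Trigraph.mem_pimg_of h))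
                · rw [hE'e] at h; exact absurd h (Set.notMem_empty _)
                · rw [hF'e] at h; exact absurd h (Set.notMem_empty _)
          have hPcR : T.SComplete (pimg B') (pimg D') := by
            rintro p ⟨up, hup, rfl⟩ r ⟨ur, hur, rfl⟩
            exact (T.block_sedge_ll_iff A B up ur).1 (hB'c _ hup _ (Or.inl hur))
          have hPaS : T.SAnticomplete (pimg B') (pimg C') := by
            rintro p ⟨up, hup, rfl⟩ r ⟨ur, hur, rfl⟩
            exact (T.block_santi_ll_iff A B up ur).1 (hB'a _ hup _ (Or.inl hur))
          have hQcS : T.SComplete (pimg A') (pimg C') := by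
            rintro p ⟨up, hup, rfl⟩ r ⟨ur, hur, rfl⟩
            exact (T.block_sedge_ll_iff A B up ur).1 (hA'c _ hup _ (Or.inl hur))
          have hQaR : T.SAnticomplete (pimg A') (pimg D') := by
            rintro p ⟨up, hup, rfl⟩ r ⟨ur, hur, rfl⟩
            exact (T.block_santi_ll_iff A B up ur).1 (hA'a _ hup _ (Or.inl hur))
          have hRA : pimg D' ⊆ A := by
            rintro v ⟨u, hu, rfl⟩
            exact (T.block_sedge_c_iff A B u).1 (hB'c _ hcB _ (Or.inl hu))
          have hSB : pimg C' ⊆ B := by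
            rintro v ⟨u, hu, rfl⟩
            exact (T.block_sedge_d_iff A B u).1 (hA'c _ hdA _ (Or.inl hu))
          have hPQne : (pimg B' ∪ pimg A').Nonempty := by
            rw [← Trigraph.pimg_union, Set.union_comm B' A']
            exact Trigraph.pimg_nonempty_of_ncard h3'
          have hcn : Sum.inr 0 ∉ D' ∪ C' := by
            rintro (h | h)
            · exact hXK' _ (Or.inl (Or.inl (Or.inr h))) (Or.inr hcB)
            · exact hXK' _ (Or.inl (Or.inl (Or.inl h))) (Or.inr hcB)
          have hdn : Sum.inr 1 ∉ D' ∪ C' := by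
            rintro (h | h)
            · exact hXK' _ (Or.inl (Or.inl (Or.inr h))) (Or.inl hdA)
            · exact hXK' _ (Or.inl (Or.inl (Or.inl h))) (Or.inl hdA)
          have hRS3 : 3 ≤ (pimg D' ∪ pimg C').ncard := by
            rw [← Trigraph.pimg_union,
              Trigraph.pimg_ncard (Trigraph.range_inl_of_not_mem hcn hdn),
              Set.union_comm D' C']
            have hCDu : C' ∪ D' ∪ E' ∪ F' = C' ∪ D' := by rw [hE'e, hF'e]; simp
            rwa [hCDu] at hK3'
          obtain ⟨X'', hcut'', hss''⟩ := T.lemM hCD hCE hCF hDE hDF hEF hU hAc hAa hBc hBa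
            ⟨c0, hc0⟩ ⟨d0, hd0⟩ hK3 hpart (Trigraph.pimg_disjoint hA'B'.symm)
            (Trigraph.pimg_disjoint hdB'D') (Trigraph.pimg_disjoint hdB'C')
            (Trigraph.pimg_disjoint hdA'D') (Trigraph.pimg_disjoint hdA'C')
            (Trigraph.pimg_disjoint hC'D'.symm) hPcR hPaS hQcS hQaR hRA hSB hPQne hRS3
          exact hminimal X'' hcut'' hss''
        · -- c, d ∈ B' : contradiction
          have hKempty : ∀ w, w ∉ C' ∪ D' ∪ E' ∪ F' := by
            rintro (u | i) hw
            · rcases hw with ((h | h) | h) | h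
              · have hh0 := (T.block_santi_c_iff A B u).1 (hB'a _ hcB _ (Or.inl h))
                have hh1 := (T.block_santi_d_iff A B u).1 (hB'a _ hdB _ (Or.inl h))
                rcases u.2 with h' | h'
                · exact hh0 h'
                · exact hh1 h'
              · exact hABd.le_bot ⟨(T.block_sedge_c_iff A B u).1 (hB'c _ hcB _ (Or.inl h)),
                  (T.block_sedge_d_iff A B u).1 (hB'c _ hdB _ (Or.inl h))⟩
              · exact hABd.le_bot ⟨(T.block_sedge_c_iff A B u).1 (hB'c _ hcB _ (Or.inr h)),
                  (T.block_sedge_d_iff A B u).1 (hB'c _ hdB _ (Or.inr h))⟩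
              · have hh0 := (T.block_santi_c_iff A B u).1 (hB'a _ hcB _ (Or.inr h))
                have hh1 := (T.block_santi_d_iff A B u).1 (hB'a _ hdB _ (Or.inr h))
                rcases u.2 with h' | h'
                · exact hh0 h'
                · exact hh1 h'
            · have hwn := hXK' _ hw
              rcases Trigraph.fin2cases i with rfl | rfl
              · exact hwn (Or.inr hcB)
              · exact hwn (Or.inr hdB)
          have hKe : C' ∪ D' ∪ E' ∪ F' = ∅ := Set.eq_empty_iff_forall_notMem.mpr hKempty
          rw [hKe, Set.ncard_empty] at hK3'
          omega
      · -- both markers outside X' : use lemM2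
        have hdin : Sum.inr 1 ∉ A' ∪ B' := fun h => hcin (hccd.2 h)
        have hrX' : A' ∪ B' ⊆ Set.range Sum.inl :=
          Trigraph.range_inl_of_not_mem hcin hdin
        have himgpart : pimg A' ∪ pimg B' ∪ pimg C' ∪ pimg D' ∪ pimg E' ∪ pimg F'
            = A ∪ B := by
          apply Set.Subset.antisymm
          · rintro v (((((h | h) | h) | h) | h) | h) <;> exact Trigraph.pimg_subset _ h
          · intro v hv
            by_cases h1 : Sum.inl (⟨v, hv⟩ : ↥(A ∪ B)) ∈ A' ∪ B'
            · rcases h1 with h1 | h1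
              · exact Or.inl (Or.inl (Or.inl (Or.inl (Or.inl (Trigraph.mem_pimg_of h1)))))
              · exact Or.inl (Or.inl (Or.inl (Or.inl (Or.inr (Trigraph.mem_pimg_of h1)))))
            · rcases hK'X _ h1 with ((h | h) | h) | h
              · exact Or.inl (Or.inl (Or.inl (Or.inr (Trigraph.mem_pimg_of h))))
              · exact Or.inl (Or.inl (Or.inr (Trigraph.mem_pimg_of h)))
              · exact Or.inl (Or.inr (Trigraph.mem_pimg_of h))
              · exact Or.inr (Trigraph.mem_pimg_of h)
        have hic : T.SComplete (pimg A') (pimg C' ∪ pimg E') := by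
          rintro a ⟨ua, hua, rfl⟩ x (⟨ux, hux, rfl⟩ | ⟨ux, hux, rfl⟩)
          · exact (T.block_sedge_ll_iff A B ua ux).1 (hA'c _ hua _ (Or.inl hux))
          · exact (T.block_sedge_ll_iff A B ua ux).1 (hA'c _ hua _ (Or.inr hux))
        have hia : T.SAnticomplete (pimg A') (pimg D' ∪ pimg F') := by
          rintro a ⟨ua, hua, rfl⟩ x (⟨ux, hux, rfl⟩ | ⟨ux, hux, rfl⟩)
          · exact (T.block_santi_ll_iff A B ua ux).1 (hA'a _ hua _ (Or.inl hux))
          · exact (T.block_santi_ll_iff A B ua ux).1 (hA'a _ hua _ (Or.inr hux))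
        have hjc : T.SComplete (pimg B') (pimg D' ∪ pimg E') := by
          rintro a ⟨ua, hua, rfl⟩ x (⟨ux, hux, rfl⟩ | ⟨ux, hux, rfl⟩)
          · exact (T.block_sedge_ll_iff A B ua ux).1 (hB'c _ hua _ (Or.inl hux))
          · exact (T.block_sedge_ll_iff A B ua ux).1 (hB'c _ hua _ (Or.inr hux))
        have hja : T.SAnticomplete (pimg B') (pimg C' ∪ pimg F') := by
          rintro a ⟨ua, hua, rfl⟩ x (⟨ux, hux, rfl⟩ | ⟨ux, hux, rfl⟩)
          · exact (T.block_santi_ll_iff A B ua ux).1 (hB'a _ hua _ (Or.inl hux))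
          · exact (T.block_santi_ll_iff A B ua ux).1 (hB'a _ hua _ (Or.inr hux))
        have hnsc2 : ¬ T.SComplete (pimg A') (pimg B') := by
          intro hcc
          apply hnsc'
          intro a ha b hb
          obtain ⟨ua, rfl⟩ := hrX' (Or.inl ha)
          obtain ⟨ub, rfl⟩ := hrX' (Or.inr hb)
          exact (T.block_sedge_ll_iff A B ua ub).2
            (hcc _ (Trigraph.mem_pimg_of ha) _ (Trigraph.mem_pimg_of hb))
        have hnsa2 : ¬ T.SAnticomplete (pimg A') (pimg B') := by
          intro hcc
          apply hnsa'
          intro a ha b hb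
          obtain ⟨ua, rfl⟩ := hrX' (Or.inl ha)
          obtain ⟨ub, rfl⟩ := hrX' (Or.inr hb)
          exact (T.block_santi_ll_iff A B ua ub).2
            (hcc _ (Trigraph.mem_pimg_of ha) _ (Trigraph.mem_pimg_of hb))
        have h32 : 3 ≤ (pimg A' ∪ pimg B').ncard := by
          rw [← Trigraph.pimg_union, Trigraph.pimg_ncard hrX']
          exact h3'
        have hinl2 : (pimg C' ∪ pimg D' ∪ pimg E' ∪ pimg F').Nonempty := by
          rw [← Trigraph.pimg_union, ← Trigraph.pimg_union, ← Trigraph.pimg_union]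
          exact Trigraph.pimg_nonempty_of_ncard hK3'
        have hUA : (C ∪ E) ∪ (D ∪ F) = (A ∪ B)ᶜ := by
          rw [← hU]; ext v; simp only [Set.mem_union]; tauto
        have hUB : (D ∪ E) ∪ (C ∪ F) = (A ∪ B)ᶜ := by
          rw [← hU]; ext v; simp only [Set.mem_union]; tauto
        have hdCEDF : Disjoint (C ∪ E) (D ∪ F) := Set.disjoint_union_left.mpr
          ⟨Set.disjoint_union_right.mpr ⟨hCD, hCF⟩,
           Set.disjoint_union_right.mpr ⟨hDE.symm, hEF⟩⟩
        have hdDECF : Disjoint (D ∪ E) (C ∪ F) := Set.disjoint_union_left.mpr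
          ⟨Set.disjoint_union_right.mpr ⟨hCD.symm, hDF⟩,
           Set.disjoint_union_right.mpr ⟨hCE.symm, hEF⟩⟩
        have hfinish : ∀ CA AA CB AB : Set V,
            (CA ∪ AA = (A ∪ B)ᶜ) → Disjoint CA AA →
            (CB ∪ AB = (A ∪ B)ᶜ) → Disjoint CB AB →
            (∀ v ∈ CA, ∀ a ∈ pimg A', T.SEdge v a) →
            (∀ v ∈ AA, ∀ a ∈ pimg A', T.SAnti v a) →
            (∀ v ∈ CB, ∀ b ∈ pimg B', T.SEdge v b) →
            (∀ v ∈ AB, ∀ b ∈ pimg B', T.SAnti v b) →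
            (pimg C' ∪ CA ∩ AB).Nonempty → (pimg D' ∪ AA ∩ CB).Nonempty → False := by
          intro CA AA CB AB hCAu hCAd hCBu hCBd hCAc hAAa hCBc hABa hCne2 hDne2
          obtain ⟨hpair2, hss2⟩ := T.lemM2 hCAu hCAd hCBu hCBd hCAc hAAa hCBc hABa
            himgpart (Trigraph.pimg_disjoint hA'B')
            (Trigraph.pimg_disjoint hdA'C') (Trigraph.pimg_disjoint hdA'D')
            (Trigraph.pimg_disjoint hdA'E') (Trigraph.pimg_disjoint hdA'F')
            (Trigraph.pimg_disjoint hdB'C') (Trigraph.pimg_disjoint hdB'D')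
            (Trigraph.pimg_disjoint hdB'E') (Trigraph.pimg_disjoint hdB'F')
            (Trigraph.pimg_disjoint hC'D') (Trigraph.pimg_disjoint hC'E')
            (Trigraph.pimg_disjoint hC'F') (Trigraph.pimg_disjoint hD'E')
            (Trigraph.pimg_disjoint hD'F') (Trigraph.pimg_disjoint hE'F')
            hic hia hjc hja hnsc2 hnsa2 h32 hXc3 hinl2 hCne2 hDne2
          exact hminimal _ (Or.inr ⟨_, _, rfl, hpair2⟩) hss2
        rcases hK'X _ hcin with ((hc | hc) | hc) | hc
        · -- c ∈ C' : A'-side in A, B'-side in B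
          have hA'A : ∀ u : ↥(A ∪ B), Sum.inl u ∈ A' → (u : V) ∈ A := fun u hu =>
            (T.block_sedge_c_iff A B u).1 (Trigraph.sedge_symm _ (hA'c _ hu _ (Or.inl hc)))
          have hB'B : ∀ u : ↥(A ∪ B), Sum.inl u ∈ B' → (u : V) ∈ B := by
            intro u hu
            have hh := (T.block_santi_c_iff A B u).1
              (Trigraph.santi_symm _ (hB'a _ hu _ (Or.inl hc)))
            rcases hABmem u with ⟨h1, -⟩ | ⟨h1, -⟩
            · exact absurd h1 hh
            · exact h1
          refine hfinish (C ∪ E) (D ∪ F) (D ∪ E) (C ∪ F) hUA hdCEDF hUB hdDECF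
            ?_ ?_ ?_ ?_ ⟨c0, Or.inr ⟨Or.inl hc0, Or.inl hc0⟩⟩
            ⟨d0, Or.inr ⟨Or.inl hd0, Or.inl hd0⟩⟩
          · rintro v hv a ⟨ua, hua, rfl⟩
            exact T.sedge_symm (hAc _ (hA'A ua hua) v hv)
          · rintro v hv a ⟨ua, hua, rfl⟩
            exact T.santi_symm (hAa _ (hA'A ua hua) v hv)
          · rintro v hv b ⟨ub, hub, rfl⟩
            exact T.sedge_symm (hBc _ (hB'B ub hub) v hv)
          · rintro v hv b ⟨ub, hub, rfl⟩
            exact T.santi_symm (hBa _ (hB'B ub hub) v hv)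
        · -- c ∈ D' : A'-side in B, B'-side in A
          have hA'B : ∀ u : ↥(A ∪ B), Sum.inl u ∈ A' → (u : V) ∈ B := by
            intro u hu
            have hh := (T.block_santi_c_iff A B u).1
              (Trigraph.santi_symm _ (hA'a _ hu _ (Or.inl hc)))
            rcases hABmem u with ⟨h1, -⟩ | ⟨h1, -⟩
            · exact absurd h1 hh
            · exact h1
          have hB'A : ∀ u : ↥(A ∪ B), Sum.inl u ∈ B' → (u : V) ∈ A := fun u hu =>
            (T.block_sedge_c_iff A B u).1 (Trigraph.sedge_symm _ (hB'c _ hu _ (Or.inl hc)))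
          refine hfinish (D ∪ E) (C ∪ F) (C ∪ E) (D ∪ F) hUB hdDECF hUA hdCEDF
            ?_ ?_ ?_ ?_ ⟨d0, Or.inr ⟨Or.inl hd0, Or.inl hd0⟩⟩
            ⟨c0, Or.inr ⟨Or.inl hc0, Or.inl hc0⟩⟩
          · rintro v hv a ⟨ua, hua, rfl⟩
            exact T.sedge_symm (hBc _ (hA'B ua hua) v hv)
          · rintro v hv a ⟨ua, hua, rfl⟩
            exact T.santi_symm (hBa _ (hA'B ua hua) v hv)
          · rintro v hv b ⟨ub, hub, rfl⟩
            exact T.sedge_symm (hAc _ (hB'A ub hub) v hv)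
          · rintro v hv b ⟨ub, hub, rfl⟩
            exact T.santi_symm (hAa _ (hB'A ub hub) v hv)
        · -- c ∈ E' : both sides in A
          have hA'A : ∀ u : ↥(A ∪ B), Sum.inl u ∈ A' → (u : V) ∈ A := fun u hu =>
            (T.block_sedge_c_iff A B u).1 (Trigraph.sedge_symm _ (hA'c _ hu _ (Or.inr hc)))
          have hB'A : ∀ u : ↥(A ∪ B), Sum.inl u ∈ B' → (u : V) ∈ A := fun u hu =>
            (T.block_sedge_c_iff A B u).1 (Trigraph.sedge_symm _ (hB'c _ hu _ (Or.inr hc)))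
          have hcnC' : Sum.inr 0 ∉ C' := fun h => hC'E'.le_bot ⟨h, hc⟩
          have hdnC' : Sum.inr 1 ∉ C' := by
            intro hd
            obtain ⟨a, ha⟩ := hA'ne
            obtain ⟨ua, rfl⟩ := hrX' (Or.inl ha)
            have hh := (T.block_sedge_d_iff A B ua).1
              (Trigraph.sedge_symm _ (hA'c _ ha _ (Or.inl hd)))
            exact hABd.le_bot ⟨hA'A ua ha, hh⟩
          have hcnD' : Sum.inr 0 ∉ D' := fun h => hD'E'.le_bot ⟨h, hc⟩
          have hdnD' : Sum.inr 1 ∉ D' := by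
            intro hd
            obtain ⟨b, hb⟩ := hB'ne
            obtain ⟨ub, rfl⟩ := hrX' (Or.inr hb)
            have hh := (T.block_sedge_d_iff A B ub).1
              (Trigraph.sedge_symm _ (hB'c _ hb _ (Or.inl hd)))
            exact hABd.le_bot ⟨hB'A ub hb, hh⟩
          obtain ⟨x1, hx1⟩ := Trigraph.pimg_nonempty
            (Trigraph.range_inl_of_not_mem hcnC' hdnC') hC'ne
          obtain ⟨x2, hx2⟩ := Trigraph.pimg_nonempty
            (Trigraph.range_inl_of_not_mem hcnD' hdnD') hD'ne
          refine hfinish (C ∪ E) (D ∪ F) (C ∪ E) (D ∪ F) hUA hdCEDF hUA hdCEDF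
            ?_ ?_ ?_ ?_ ⟨x1, Or.inl hx1⟩ ⟨x2, Or.inl hx2⟩
          · rintro v hv a ⟨ua, hua, rfl⟩
            exact T.sedge_symm (hAc _ (hA'A ua hua) v hv)
          · rintro v hv a ⟨ua, hua, rfl⟩
            exact T.santi_symm (hAa _ (hA'A ua hua) v hv)
          · rintro v hv b ⟨ub, hub, rfl⟩
            exact T.sedge_symm (hAc _ (hB'A ub hub) v hv)
          · rintro v hv b ⟨ub, hub, rfl⟩
            exact T.santi_symm (hAa _ (hB'A ub hub) v hv)
        · -- c ∈ F' : both sides in B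
          have hA'B : ∀ u : ↥(A ∪ B), Sum.inl u ∈ A' → (u : V) ∈ B := by
            intro u hu
            have hh := (T.block_santi_c_iff A B u).1
              (Trigraph.santi_symm _ (hA'a _ hu _ (Or.inr hc)))
            rcases hABmem u with ⟨h1, -⟩ | ⟨h1, -⟩
            · exact absurd h1 hh
            · exact h1
          have hB'B : ∀ u : ↥(A ∪ B), Sum.inl u ∈ B' → (u : V) ∈ B := by
            intro u hu
            have hh := (T.block_santi_c_iff A B u).1
              (Trigraph.santi_symm _ (hB'a _ hu _ (Or.inr hc)))
            rcases hABmem u with ⟨h1, -⟩ | ⟨h1, -⟩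
            · exact absurd h1 hh
            · exact h1
          have hcnC' : Sum.inr 0 ∉ C' := fun h => hC'F'.le_bot ⟨h, hc⟩
          have hdnC' : Sum.inr 1 ∉ C' := by
            intro hd
            obtain ⟨b, hb⟩ := hB'ne
            obtain ⟨ub, rfl⟩ := hrX' (Or.inr hb)
            have hh := (T.block_santi_d_iff A B ub).1
              (Trigraph.santi_symm _ (hB'a _ hb _ (Or.inl hd)))
            exact hh (hB'B ub hb)
          have hcnD' : Sum.inr 0 ∉ D' := fun h => hD'F'.le_bot ⟨h, hc⟩
          have hdnD' : Sum.inr 1 ∉ D' := by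
            intro hd
            obtain ⟨a, ha⟩ := hA'ne
            obtain ⟨ua, rfl⟩ := hrX' (Or.inl ha)
            have hh := (T.block_santi_d_iff A B ua).1
              (Trigraph.santi_symm _ (hA'a _ ha _ (Or.inl hd)))
            exact hh (hA'B ua ha)
          obtain ⟨x1, hx1⟩ := Trigraph.pimg_nonempty
            (Trigraph.range_inl_of_not_mem hcnC' hdnC') hC'ne
          obtain ⟨x2, hx2⟩ := Trigraph.pimg_nonempty
            (Trigraph.range_inl_of_not_mem hcnD' hdnD') hD'ne
          refine hfinish (D ∪ E) (C ∪ F) (D ∪ E) (C ∪ F) hUB hdDECF hUB hdDECF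
            ?_ ?_ ?_ ?_ ⟨x1, Or.inl hx1⟩ ⟨x2, Or.inl hx2⟩
          · rintro v hv a ⟨ua, hua, rfl⟩
            exact T.sedge_symm (hBc _ (hA'B ua hua) v hv)
          · rintro v hv a ⟨ua, hua, rfl⟩
            exact T.santi_symm (hBa _ (hA'B ua hua) v hv)
          · rintro v hv b ⟨ub, hub, rfl⟩
            exact T.sedge_symm (hBc _ (hB'B ub hub) v hv)
          · rintro v hv b ⟨ub, hub, rfl⟩
            exact T.santi_symm (hBa _ (hB'B ub hub) v hv)
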